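/- arXiv:math/0001088 — 6 statements merged into one kernel-verified Lean document; each statement's English description precedes it below -/
import Mathlib

section
/- Let f : ℂ → ℂ be an entire function such that for every ε > 0 there exists a constant c(ε) > 0 with |f(z)| ≤ c(ε)·exp(ε·|z|) for all z ∈ ℂ. If f(n) = f(0) for every integer n ∈ ℤ, then f is constant. -/
open Metric

/-- Modulus of a list product. -/
lemma abs_list_prod' (l : List ℂ) :
    ‖l.prod‖ = (l.map (fun x => ‖x‖)).prod := by
  induction l with
  | nil => simp
  | cons a l ih => simp [norm_mul, ih]

lemma pow_le_list_prod' {b : ℝ} (hb : 0 ≤ b) :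
    ∀ l : List ℝ, (∀ x ∈ l, b ≤ x) → b ^ l.length ≤ l.prod := by
  intro l
  induction l with
  | nil => simp
  | cons a l ih =>
    intro h
    have ha : b ≤ a := h a (by simp)
    have hl : b ^ l.length ≤ l.prod := ih (fun x hx => h x (by simp [hx]))
    have hlp : (0:ℝ) ≤ b ^ l.length := pow_nonneg hb _
    calc b ^ (a :: l).length = b * b ^ l.length := by rw [List.length_cons, pow_succ']
    _ ≤ a * l.prod := mul_le_mul ha hl hlp (le_trans hb ha)
    _ = (a :: l).prod := by simp

lemma list_prod_le_pow' {b : ℝ} :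
    ∀ l : List ℝ, (∀ x ∈ l, 0 ≤ x ∧ x ≤ b) → l.prod ≤ b ^ l.length := by
  intro l
  induction l with
  | nil => simp
  | cons a l ih =>
    intro h
    obtain ⟨ha0, hab⟩ := h a (by simp)
    have hl : l.prod ≤ b ^ l.length := ih (fun x hx => h x (by simp [hx]))
    have hlp : (0:ℝ) ≤ l.prod := List.prod_nonneg (fun x hx => (h x (by simp [hx])).1)
    calc (a :: l).prod = a * l.prod := by simp
    _ ≤ b * b ^ l.length := mul_le_mul hab hl hlp (le_trans ha0 hab)
    _ = b ^ (a :: l).length := by rw [List.length_cons, pow_succ']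

/-- Factoring an entire function by finitely many distinct zeros. -/
lemma factor_zeros :
    ∀ (l : List ℂ) (h : ℂ → ℂ), Differentiable ℂ h → l.Pairwise (· ≠ ·) →
      (∀ a ∈ l, h a = 0) →
      ∃ F : ℂ → ℂ, Differentiable ℂ F ∧
        ∀ z, h z = (l.map (fun a => z - a)).prod * F z := by
  intro l
  induction l with
  | nil => intro h hd _ _; exact ⟨h, hd, by simp⟩
  | cons a l ih =>
    intro h hd hp hz
    have ha : h a = 0 := hz a (by simp)
    set F1 : ℂ → ℂ := dslope h a with hF1
    have hF1d : Differentiable ℂ F1 := by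
      rw [← differentiableOn_univ] at hd ⊢
      exact (Complex.differentiableOn_dslope Filter.univ_mem).mpr hd
    have hF1z : ∀ b ∈ l, F1 b = 0 := by
      intro b hb
      have hba : b ≠ a := (List.pairwise_cons.mp hp).1 b hb |>.symm
      rw [hF1, dslope_of_ne _ hba, slope]
      simp [hz b (by simp [hb]), ha]
    have hkey : ∀ z, h z = (z - a) * F1 z := by
      intro z
      have := sub_smul_dslope h a z
      rw [ha, sub_zero] at this
      rw [← this, smul_eq_mul]
    obtain ⟨F, hFd, hFe⟩ := ih F1 hF1d (List.pairwise_cons.mp hp).2 hF1z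
    refine ⟨F, hFd, fun z => ?_⟩
    rw [List.map_cons, List.prod_cons, mul_assoc, ← hFe z, hkey z]

/-- Cartwright-type theorem: an entire function of arbitrarily small exponential
type which is constant on the integers is constant. -/
theorem cartwright_small_type_const_on_int
    (f : ℂ → ℂ) (hf : Differentiable ℂ f)
    (hgrowth : ∀ ε : ℝ, 0 < ε → ∃ c : ℝ, 0 < c ∧
      ∀ z : ℂ, ‖f z‖ ≤ c * Real.exp (ε * ‖z‖))
    (hint : ∀ n : ℤ, f n = f 0) :
    ∀ z : ℂ, f z = f 0 := by
  intro w
  set h : ℂ → ℂ := fun z => f z - f 0 with hh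
  have hd : Differentiable ℂ h := hf.sub_const _
  have hzero : ∀ n : ℤ, h n = 0 := fun n => by simp [hh, hint n]
  obtain ⟨c, hc, hb⟩ := hgrowth (1/100) (by norm_num)
  set C : ℝ := c + ‖f 0‖ with hCdef
  have hC0 : 0 < C := lt_of_lt_of_le hc (by simp [hCdef, norm_nonneg])
  have hC : ∀ z, ‖h z‖ ≤ C * Real.exp ((1/100) * ‖z‖) := by
    intro z
    have h1 : ‖h z‖ ≤ ‖f z‖ + ‖f 0‖ := by
      simpa [hh] using norm_sub_le (f z) (f 0)
    have h2 : (1:ℝ) ≤ Real.exp ((1/100) * ‖z‖) :=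
      Real.one_le_exp (by positivity)
    calc ‖h z‖ ≤ ‖f z‖ + ‖f 0‖ := h1
      _ ≤ c * Real.exp ((1/100) * ‖z‖)
            + ‖f 0‖ * Real.exp ((1/100) * ‖z‖) := by
          have := hb z
          nlinarith [norm_nonneg (f 0)]
      _ = C * Real.exp ((1/100) * ‖z‖) := by ring
  -- Key estimate for each large N
  have key : ∀ N : ℕ, 1 ≤ N → ‖w‖ ≤ N →
      ‖h w‖ ≤ C / 2 * (Real.exp (1/20) * (1/4)) ^ N := by
    intro N hN1 hwN
    set l : List ℂ := (List.range (2*N+1)).map (fun k : ℕ => (k : ℂ) - N) with hl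
    have hlen : l.length = 2*N+1 := by simp [hl]
    have hmem : ∀ a ∈ l, ∃ k : ℕ, k < 2*N+1 ∧ a = (k : ℂ) - N := by
      intro a hal
      rw [hl, List.mem_map] at hal
      obtain ⟨k, hk, rfl⟩ := hal
      exact ⟨k, List.mem_range.mp hk, rfl⟩
    have habs_le : ∀ a ∈ l, ‖a‖ ≤ N := by
      intro a hal
      obtain ⟨k, hk, rfl⟩ := hmem a hal
      have : ((k:ℂ) - N) = (((k:ℝ) - N : ℝ) : ℂ) := by push_cast; ring
      rw [this, Complex.norm_real, Real.norm_eq_abs]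
      rw [abs_le]
      constructor
      · have : (0:ℝ) ≤ (k:ℝ) := Nat.cast_nonneg k
        linarith
      · have : (k:ℝ) ≤ 2*N := by
          have : (k:ℝ) < 2*N+1 := by exact_mod_cast hk
          have hk' : k ≤ 2*N := by omega
          exact_mod_cast hk'
        linarith
    have hpair : l.Pairwise (· ≠ ·) := by
      rw [hl]
      refine List.Pairwise.map _ ?_ (List.pairwise_lt_range (n := 2*N+1))
      intro i j hij
      intro hcon
      have : (i:ℂ) = j := by
        have := sub_left_injective hcon
        exact this
      have : (i:ℕ) = j := by exact_mod_cast this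
      omega
    have hvanish : ∀ a ∈ l, h a = 0 := by
      intro a hal
      obtain ⟨k, hk, rfl⟩ := hmem a hal
      have : ((k:ℂ) - N) = (((k:ℤ) - (N:ℤ) : ℤ) : ℂ) := by push_cast; ring
      rw [this]
      exact hzero _
    obtain ⟨F, hFd, hFe⟩ := factor_zeros l h hd hpair hvanish
    have hN0 : (0:ℝ) < N := by exact_mod_cast hN1
    set R : ℝ := 5 * N with hR
    have hR0 : 0 < R := by positivity
    -- bound F on the sphere
    have hFsphere : ∀ z ∈ sphere (0:ℂ) R,
        ‖F z‖ ≤ C * Real.exp ((1/100) * R) / (4*N) ^ (2*N+1) := by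
      intro z hzs
      have hzR : ‖z‖ = R := by
        simpa [Complex.dist_eq] using (mem_sphere_iff_norm.mp hzs)
      have hprod_lb : ((4:ℝ)*N) ^ (2*N+1) ≤
          ‖(l.map (fun a => z - a)).prod‖ := by
        rw [abs_list_prod', List.map_map]
        have := pow_le_list_prod' (b := 4*N) (by positivity)
          (l.map ((fun x => ‖x‖) ∘ fun a => z - a)) ?_
        · simpa [hlen] using this
        · intro x hx
          rw [List.mem_map] at hx
          obtain ⟨a, hal, rfl⟩ := hx
          have h1 : ‖a‖ ≤ N := habs_le a hal
          have h2 : ‖z‖ - ‖a‖ ≤ ‖z - a‖ := by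
            have := norm_sub_norm_le z a
            simpa using this
          simp only [Function.comp_apply]
          have h3 : R - (N:ℝ) = 4*N := by rw [hR]; ring
          rw [← hzR] at h3
          linarith
      have hprod_pos : (0:ℝ) < ((4:ℝ)*N) ^ (2*N+1) := by positivity
      have hz_bound : ‖h z‖ ≤ C * Real.exp ((1/100) * R) := by
        have := hC z
        rw [hzR] at this
        exact this
      have heq := hFe z
      have habs : ‖h z‖
          = ‖(l.map (fun a => z - a)).prod‖ * ‖F z‖ := by
        rw [heq, norm_mul]
      rw [le_div_iff₀ hprod_pos]
      calc ‖F z‖ * ((4:ℝ)*N) ^ (2*N+1)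
          ≤ ‖F z‖ * ‖(l.map (fun a => z - a)).prod‖ :=
            mul_le_mul_of_nonneg_left hprod_lb (norm_nonneg _)
        _ = ‖h z‖ := by rw [habs]; ring
        _ ≤ C * Real.exp ((1/100) * R) := hz_bound
    -- max modulus principle on the ball
    have hFw : ‖F w‖ ≤ C * Real.exp ((1/100) * R) / (4*N) ^ (2*N+1) := by
      have hbd : Bornology.IsBounded (ball (0:ℂ) R) := isBounded_ball
      have hdc : DiffContOnCl ℂ F (ball (0:ℂ) R) := hFd.diffContOnCl
      have hfr : ∀ z ∈ frontier (ball (0:ℂ) R),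
          ‖F z‖ ≤ C * Real.exp ((1/100) * R) / (4*N) ^ (2*N+1) := by
        intro z hz
        rw [frontier_ball _ (ne_of_gt hR0)] at hz
        simpa using hFsphere z hz
      have hwc : w ∈ closure (ball (0:ℂ) R) := by
        rw [closure_ball _ (ne_of_gt hR0)]
        rw [mem_closedBall_iff_norm, sub_zero]
        calc ‖w‖ ≤ N := hwN
          _ ≤ R := by rw [hR]; nlinarith
      simpa using
        Complex.norm_le_of_forall_mem_frontier_norm_le hbd hdc hfr hwc
    -- product at w is at most (2N)^(2N+1)
    have hprodw : ‖(l.map (fun a => w - a)).prod‖ ≤ ((2:ℝ)*N) ^ (2*N+1) := by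
      rw [abs_list_prod', List.map_map]
      have := list_prod_le_pow' (b := 2*N)
        (l.map ((fun x => ‖x‖) ∘ fun a => w - a)) ?_
      · simpa [hlen] using this
      · intro x hx
        rw [List.mem_map] at hx
        obtain ⟨a, hal, rfl⟩ := hx
        refine ⟨norm_nonneg _, ?_⟩
        simp only [Function.comp_apply]
        calc ‖w - a‖ ≤ ‖w‖ + ‖a‖ :=
              norm_sub_le w a
          _ ≤ (N:ℝ) + N := add_le_add hwN (habs_le a hal)
          _ = 2*N := by ring
    have hfinal : ‖h w‖ ≤
        ((2:ℝ)*N) ^ (2*N+1) * (C * Real.exp ((1/100) * R) / (4*N) ^ (2*N+1)) := by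
      have heq := hFe w
      rw [heq, norm_mul]
      exact mul_le_mul hprodw hFw (norm_nonneg _) (by positivity)
    -- simplify: (2N)^(2N+1)/(4N)^(2N+1) = (1/2)^(2N+1)
    have hratio : ((2:ℝ)*N) ^ (2*N+1) / (4*N) ^ (2*N+1) = (1/2:ℝ) ^ (2*N+1) := by
      rw [← div_pow]
      congr 1
      field_simp
      ring
    have hexp : Real.exp ((1/100) * R) = Real.exp (1/20) ^ N := by
      rw [hR, ← Real.exp_nat_mul]
      congr 1
      ring
    calc ‖h w‖
        ≤ ((2:ℝ)*N) ^ (2*N+1) * (C * Real.exp ((1/100) * R) / (4*N) ^ (2*N+1)) := hfinal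
      _ = C * Real.exp ((1/100) * R) * (((2:ℝ)*N) ^ (2*N+1) / (4*N) ^ (2*N+1)) := by
          ring
      _ = C * Real.exp (1/20) ^ N * (1/2:ℝ) ^ (2*N+1) := by rw [hratio, hexp]
      _ = C / 2 * (Real.exp (1/20) * (1/4)) ^ N := by
          rw [mul_pow, pow_add, pow_mul]
          norm_num
          ring
  -- conclude by letting N → ∞
  have hr0 : (0:ℝ) ≤ Real.exp (1/20) * (1/4) := by positivity
  have hr1 : Real.exp (1/20) * (1/4) < 1 := by
    have h1 : Real.exp (1/20 : ℝ) < Real.exp 1 := by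
      apply Real.exp_lt_exp.mpr; norm_num
    have h2 : Real.exp 1 < 2.7182818286 := Real.exp_one_lt_d9
    nlinarith
  have htend : Filter.Tendsto (fun N : ℕ => C / 2 * (Real.exp (1/20) * (1/4)) ^ N)
      Filter.atTop (nhds 0) := by
    have := (tendsto_pow_atTop_nhds_zero_of_lt_one hr0 hr1).const_mul (C / 2)
    simpa using this
  have hev : ∀ᶠ N : ℕ in Filter.atTop,
      ‖h w‖ ≤ C / 2 * (Real.exp (1/20) * (1/4)) ^ N := by
    rw [Filter.eventually_atTop]
    refine ⟨max 1 ⌈‖w‖⌉₊, fun N hN => ?_⟩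
    have hN1 : 1 ≤ N := le_trans (le_max_left _ _) hN
    have hwN : ‖w‖ ≤ N := by
      have h1 : ⌈‖w‖⌉₊ ≤ N := le_trans (le_max_right _ _) hN
      calc ‖w‖ ≤ (⌈‖w‖⌉₊ : ℝ) := Nat.le_ceil _
        _ ≤ N := by exact_mod_cast h1
    exact key N hN1 hwN
  have : ‖h w‖ ≤ 0 := ge_of_tendsto htend hev
  have : ‖h w‖ = 0 := le_antisymm this (norm_nonneg _)
  have : h w = 0 := by simpa using this
  exact sub_eq_zero.mp this
end

section
/- Let f : ℂ → ℂ be an entire function for which there exist constants c > 0 and σ' with 0 ≤ σ' < π such that |f(z)| ≤ c·exp(σ'·|z|) for all z ∈ ℂ. If f(n) = f(0) for every integer n ∈ ℤ, then f is constant. -/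
open Complex Set Filter Bornology Asymptotics Topology

local notation "π" => Real.pi
local notation "expR" => Real.exp

lemma carlson_abs_sin_sq (x y : ℝ) :
    (‖Complex.sin ((x:ℂ) + (y:ℂ)*I)‖)^2
      = (Real.sin x)^2 + (Real.sinh y)^2 := by
  have h : Complex.sin ((x:ℂ) + (y:ℂ)*I)
      = ((Real.sin x * Real.cosh y : ℝ) : ℂ) + ((Real.cos x * Real.sinh y : ℝ) : ℂ) * I := by
    rw [Complex.sin_add, Complex.sin_mul_I, Complex.cos_mul_I]
    push_cast [← Complex.ofReal_sin, ← Complex.ofReal_cos, ← Complex.ofReal_sinh,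
      ← Complex.ofReal_cosh]
    ring
  rw [h, ← Complex.normSq_eq_norm_sq, Complex.normSq_add_mul_I]
  have h1 := Real.sin_sq_add_cos_sq x
  have h2 := Real.cosh_sq y
  nlinarith [Real.sinh_sq y]

lemma carlson_abs_sin_sq' (z : ℂ) :
    (‖Complex.sin z‖)^2 = (Real.sin z.re)^2 + (Real.sinh z.im)^2 := by
  have := carlson_abs_sin_sq z.re z.im
  rwa [Complex.re_add_im] at this

lemma carlson_sinh_ge (t : ℝ) (ht : Real.pi/8 ≤ t) : Real.exp t / 4 ≤ Real.sinh t := by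
  rw [Real.sinh_eq]
  have h2 : Real.log 2 / 2 ≤ t := by
    have := Real.log_two_lt_d9
    have := Real.pi_gt_three
    linarith
  have : Real.exp (-t) ≤ Real.exp t / 2 := by
    rw [div_eq_mul_inv, ← Real.exp_log (by norm_num : (0:ℝ) < 2)]
    rw [← Real.exp_neg, ← Real.exp_add]
    apply Real.exp_le_exp.2
    linarith
  linarith

lemma carlson_abs_sinh (t : ℝ) : |Real.sinh t| = Real.sinh |t| := by
  rcases abs_cases t with ⟨h1, h2⟩ | ⟨h1, h2⟩
  · rw [h1, _root_.abs_of_nonneg (Real.sinh_nonneg_iff.2 h2)]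
  · rw [h1, Real.sinh_neg, _root_.abs_of_nonpos (Real.sinh_nonpos_iff.2 h2.le)]

lemma carlson_sphere_real (x y : ℝ) (hsq : x^2 + y^2 = 25/64) :
    (1/2:ℝ)^2 ≤ (Real.sin (π * x))^2 + (Real.sinh (π * y))^2 := by
  have hπ : (0:ℝ) < π := Real.pi_pos
  have hπ3 : (3:ℝ) < π := Real.pi_gt_three
  have hπ4 : π < 3.15 := by
    have := Real.pi_lt_d2
    linarith
  rcases le_or_gt (1/4 : ℝ) |y| with hy4 | hy4
  · have h2 : π * |y| ≤ Real.sinh (π * |y|) := Real.self_le_sinh_iff.2 (by positivity)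
    have h3 : (1/2:ℝ) ≤ Real.sinh (π * |y|) := by nlinarith
    have h4 : Real.sinh (π * |y|) = |Real.sinh (π * y)| := by
      rw [carlson_abs_sinh, abs_mul, _root_.abs_of_pos hπ]
    rw [h4] at h3
    nlinarith [_root_.sq_abs (Real.sinh (π * y)), sq_nonneg (Real.sin (π * x))]
  · have hx2 : (21:ℝ)/64 ≤ x^2 := by nlinarith [_root_.sq_abs y, abs_nonneg y]
    have hxu : x^2 ≤ 25/64 := by nlinarith [sq_nonneg y]
    have hxl : (1/2:ℝ) ≤ |x| := by
      by_contra hcon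
      push_neg at hcon
      have : x^2 < 1/4 := by rw [← _root_.sq_abs]; nlinarith [abs_nonneg x]
      linarith
    have hxu' : |x| ≤ 5/8 := by
      by_contra hcon
      push_neg at hcon
      have : (25:ℝ)/64 < x^2 := by rw [← _root_.sq_abs]; nlinarith [abs_nonneg x]
      linarith
    have hsx : (Real.sin (π * x))^2 = (Real.sin (π * |x|))^2 := by
      rcases abs_cases x with ⟨h1, _⟩ | ⟨h1, _⟩
      · rw [h1]
      · rw [h1, show π * -x = -(π * x) by ring, Real.sin_neg]; ring
    have hflip : Real.sin (π * |x|) = Real.sin (π * (1 - |x|)) := by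
      rw [show π * (1 - |x|) = π - π * |x| by ring, Real.sin_pi_sub]
    have hj : 2 * (1 - |x|) ≤ Real.sin (π * (1 - |x|)) := by
      have h0 : (0:ℝ) ≤ π * (1 - |x|) := by nlinarith
      have h1 : π * (1 - |x|) ≤ π/2 := by nlinarith
      have h5 := Real.mul_le_sin h0 h1
      have h6 : 2/π * (π * (1 - |x|)) = 2 * (1 - |x|) := by field_simp
      linarith [h6 ▸ h5]
    have hge : (3/4:ℝ) ≤ Real.sin (π * (1 - |x|)) := by nlinarith
    rw [hsx, hflip]
    nlinarith [sq_nonneg (Real.sinh (π * y))]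

/-- decay lower bound away from the real axis -/
lemma carlson_sin_lower (z : ℂ) (hy : 1/8 ≤ |z.im|) :
    Real.exp (π * |z.im|) / 4 ≤ ‖Complex.sin ((π:ℂ) * z)‖ := by
  have hre : ((π:ℂ) * z).im = π * z.im := by simp
  have h := carlson_abs_sin_sq' ((π:ℂ) * z)
  have hπ : (0:ℝ) < π := Real.pi_pos
  have h8 : π/8 ≤ π * |z.im| := by nlinarith
  have hs : Real.exp (π * |z.im|) / 4 ≤ Real.sinh (π * |z.im|) := carlson_sinh_ge _ h8
  have habs : |Real.sinh (((π:ℂ) * z).im)| = Real.sinh (π * |z.im|) := by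
    rw [hre, carlson_abs_sinh, abs_mul, _root_.abs_of_pos hπ]
  have h2 : Real.sinh (π * |z.im|) ≤ ‖Complex.sin ((π:ℂ) * z)‖ := by
    have hnn : 0 ≤ Real.sinh (π * |z.im|) := Real.sinh_nonneg_iff.2 (by positivity)
    nlinarith [norm_nonneg (Complex.sin ((π:ℂ) * z)),
      _root_.sq_abs (Real.sinh (((π:ℂ)*z).im)), sq_nonneg (Real.sin ((((π:ℂ))*z).re))]
  linarith

lemma carlson_sin_sphere (n : ℤ) (w : ℂ) (h : ‖w - (n:ℂ)‖ = 5/8) :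
    1/2 ≤ ‖Complex.sin ((π:ℂ) * w)‖ := by
  have hn : Complex.normSq (w - (n:ℂ)) = 25/64 := by
    rw [← Complex.sq_norm, h]; norm_num
  have hsq : (w.re - n)^2 + w.im^2 = 25/64 := by
    simp only [Complex.normSq_apply, Complex.sub_re, Complex.sub_im, Complex.intCast_re,
      Complex.intCast_im, sub_zero] at hn
    rw [sq, sq]; linarith [hn]
  have hsin_re : (Real.sin (π * w.re))^2 = (Real.sin (π * (w.re - n)))^2 := by
    have heq : π * w.re = (n:ℝ) * π + π * (w.re - n) := by ring
    rw [heq, Real.sin_add, Real.sin_int_mul_pi, zero_mul, zero_add, mul_pow]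
    have h1 := Real.abs_cos_int_mul_pi n
    have h2 : (Real.cos ((n:ℝ) * π))^2 = 1 := by
      rw [← _root_.sq_abs, h1]; norm_num
    rw [h2, one_mul]
  have key := carlson_sphere_real (w.re - n) w.im hsq
  have hre2 : ((π:ℂ) * w).re = π * w.re := by simp
  have him2 : ((π:ℂ) * w).im = π * w.im := by simp
  have h3 : (1/2:ℝ)^2 ≤ (‖Complex.sin ((π:ℂ) * w)‖)^2 := by
    rw [carlson_abs_sin_sq', hre2, him2, hsin_re]
    exact key
  nlinarith [norm_nonneg (Complex.sin ((π:ℂ) * w))]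

lemma carlson_abs_exp_lin (s t : ℝ) (z : ℂ) :
    ‖Complex.exp (((s:ℂ) + (t:ℂ)*I) * z)‖ = expR (s * z.re - t * z.im) := by
  rw [Complex.norm_exp]
  congr 1
  rw [Complex.mul_re]
  simp [Complex.add_re, Complex.add_im, Complex.mul_I_re, Complex.mul_I_im,
    Complex.ofReal_re, Complex.ofReal_im]

lemma carlson_bigO (G : ℂ → ℂ) (A B : ℝ)
    (hG : ∀ z : ℂ, ‖G z‖ ≤ A * expR (B * ‖z‖))
    (l : Filter ℂ) :
    ∃ c' < (2:ℝ), ∃ B', G =O[l] fun z => expR (B' * ‖z‖ ^ c') := by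
  refine ⟨1, one_lt_two, |B|, ?_⟩
  rw [isBigO_iff]
  refine ⟨|A|, Eventually.of_forall fun z => ?_⟩
  rw [Real.rpow_one, Real.norm_eq_abs, Real.abs_exp]
  calc ‖G z‖ ≤ A * expR (B * ‖z‖) := hG z
    _ ≤ |A| * expR (|B| * ‖z‖) := by
        apply mul_le_mul (le_abs_self A) (Real.exp_le_exp.2 ?_) (Real.exp_pos _).le (abs_nonneg A)
        exact mul_le_mul_of_nonneg_right (le_abs_self B) (norm_nonneg z)

lemma carlson_step1 (F : ℂ → ℂ) (hF : Differentiable ℂ F) (A B σ τ : ℝ)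
    (hgrow : ∀ z : ℂ, ‖F z‖ ≤ A * expR (B * ‖z‖))
    (hre : ∀ x : ℝ, ‖F x‖ ≤ A * expR (σ * |x|))
    (him : ∀ y : ℝ, ‖F ((y:ℂ) * I)‖ ≤ A * expR (-τ * |y|)) :
    ∀ z : ℂ, ‖F z‖ ≤ A * expR (σ * |z.re| - τ * |z.im|) := by
  have habs : ∀ (s t : ℝ) (w : ℂ),
      ‖F w * Complex.exp (((s:ℂ) + (t:ℂ)*I) * w)‖
        = ‖F w‖ * expR (s * w.re - t * w.im) := fun s t w => by
    rw [norm_mul, carlson_abs_exp_lin]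
  have hd : ∀ (s t : ℝ) (U : Set ℂ),
      DiffContOnCl ℂ (fun w => F w * Complex.exp (((s:ℂ) + (t:ℂ)*I) * w)) U := fun s t U =>
    (hF.mul ((differentiable_id.const_mul _).cexp)).diffContOnCl
  have hO : ∀ (s t : ℝ) (l : Filter ℂ), ∃ c' < (2:ℝ), ∃ B',
      (fun w => F w * Complex.exp (((s:ℂ) + (t:ℂ)*I) * w)) =O[l]
        fun w => expR (B' * ‖w‖ ^ c') := by
    intro s t l
    apply carlson_bigO _ A (|B| + (|s| + |t|))
    intro w
    have h1 : ‖F w * Complex.exp (((s:ℂ) + (t:ℂ)*I) * w)‖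
        = ‖F w‖ * expR (s * w.re - t * w.im) := by
      rw [norm_mul, carlson_abs_exp_lin]
    rw [h1]
    have hre' := Complex.abs_re_le_norm w
    have him' := Complex.abs_im_le_norm w
    have h2 : s * w.re - t * w.im ≤ (|s| + |t|) * ‖w‖ := by
      have e1 : s * w.re ≤ |s| * ‖w‖ :=
        (le_abs_self _).trans (by rw [abs_mul]; exact mul_le_mul_of_nonneg_left hre' (abs_nonneg s))
      have e2 : -(t * w.im) ≤ |t| * ‖w‖ := by
        refine (neg_le_abs _).trans ?_
        rw [abs_mul]; exact mul_le_mul_of_nonneg_left him' (abs_nonneg t)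
      linarith
    have hA : 0 ≤ A := by
      have := (norm_nonneg (F 0)).trans (hgrow 0)
      nlinarith [Real.exp_pos (B * ‖(0:ℂ)‖)]
    calc ‖F w‖ * expR (s * w.re - t * w.im)
        ≤ (A * expR (B * ‖w‖)) * expR ((|s| + |t|) * ‖w‖) :=
          mul_le_mul (hgrow w) (Real.exp_le_exp.2 h2) (Real.exp_pos _).le (by positivity)
      _ = A * expR (B * ‖w‖ + (|s| + |t|) * ‖w‖) := by
          rw [Real.exp_add]; ring
      _ ≤ A * expR ((|B| + (|s| + |t|)) * ‖w‖) := by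
          apply mul_le_mul_of_nonneg_left _ hA
          apply Real.exp_le_exp.2
          have := le_abs_self B
          nlinarith [norm_nonneg w]
  have hfwd : ∀ (v : ℝ) (w : ℂ), ‖F w‖ ≤ A * expR (-v) →
      ‖F w‖ * expR v ≤ A := by
    intro v w hle
    calc ‖F w‖ * expR v ≤ (A * expR (-v)) * expR v :=
          mul_le_mul_of_nonneg_right hle (Real.exp_pos _).le
      _ = A := by rw [mul_assoc, ← Real.exp_add]; simp
  have hback : ∀ (v : ℝ) (w : ℂ), ‖F w‖ * expR v ≤ A →
      ‖F w‖ ≤ A * expR (-v) := by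
    intro v w hle
    have := mul_le_mul_of_nonneg_right hle (Real.exp_pos (-v)).le
    calc ‖F w‖ = ‖F w‖ * expR v * expR (-v) := by
          rw [mul_assoc, ← Real.exp_add]; simp
      _ ≤ A * expR (-v) := this
  intro z
  rcases le_or_gt 0 z.re with hx | hx <;> rcases le_or_gt 0 z.im with hy | hy
  · -- quadrant I : s = -σ, t = -τ
    have h1 : ‖F z * Complex.exp ((((-σ:ℝ):ℂ) + ((-τ:ℝ):ℂ)*I) * z)‖ ≤ A := by
      apply PhragmenLindelof.quadrant_I (hd _ _ _) (hO _ _ _) ?_ ?_ hx hy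
      · intro x hx0
        rw [habs]
        simp only [Complex.ofReal_re, Complex.ofReal_im, mul_zero, sub_zero]
        apply hfwd
        refine (hre x).trans (le_of_eq ?_)
        rw [_root_.abs_of_nonneg hx0]
        ring_nf
      · intro y hy0
        rw [habs]
        simp only [Complex.mul_I_re, Complex.mul_I_im, Complex.ofReal_re, Complex.ofReal_im,
          neg_zero, mul_zero, zero_sub]
        apply hfwd
        refine (him y).trans (le_of_eq ?_)
        rw [_root_.abs_of_nonneg hy0]
        ring_nf
    rw [habs] at h1
    have h2 := hback _ _ h1
    rw [_root_.abs_of_nonneg hx, _root_.abs_of_nonneg hy]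
    calc ‖F z‖ ≤ A * expR (-(-σ * z.re - -τ * z.im)) := h2
      _ = A * expR (σ * z.re - τ * z.im) := by ring_nf
  · -- quadrant IV : x ≥ 0, y ≤ 0 : want σx + τ y ; s = -σ, t = τ : s x - t y = -σx - τy
    have h1 : ‖F z * Complex.exp ((((-σ:ℝ):ℂ) + ((τ:ℝ):ℂ)*I) * z)‖ ≤ A := by
      apply PhragmenLindelof.quadrant_IV (hd _ _ _) (hO _ _ _) ?_ ?_ hx hy.le
      · intro x hx0
        rw [habs]
        simp only [Complex.ofReal_re, Complex.ofReal_im, mul_zero, sub_zero]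
        apply hfwd
        refine (hre x).trans (le_of_eq ?_)
        rw [_root_.abs_of_nonneg hx0]
        ring_nf
      · intro y hy0
        rw [habs]
        simp only [Complex.mul_I_re, Complex.mul_I_im, Complex.ofReal_re, Complex.ofReal_im,
          neg_zero, mul_zero, zero_sub]
        apply hfwd
        refine (him y).trans (le_of_eq ?_)
        rw [_root_.abs_of_nonpos hy0]
        ring_nf
    rw [habs] at h1
    have h2 := hback _ _ h1
    rw [_root_.abs_of_nonneg hx, _root_.abs_of_nonpos hy.le]
    calc ‖F z‖ ≤ A * expR (-(-σ * z.re - τ * z.im)) := h2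
      _ = A * expR (σ * z.re - τ * -z.im) := by ring_nf
  · -- quadrant II : x ≤ 0, y ≥ 0 : want -σx - τy ; s = σ, t = -τ : s x - t y = σ x + τ y
    have h1 : ‖F z * Complex.exp ((((σ:ℝ):ℂ) + ((-τ:ℝ):ℂ)*I) * z)‖ ≤ A := by
      apply PhragmenLindelof.quadrant_II (hd _ _ _) (hO _ _ _) ?_ ?_ hx.le hy
      · intro x hx0
        rw [habs]
        simp only [Complex.ofReal_re, Complex.ofReal_im, mul_zero, sub_zero]
        apply hfwd
        refine (hre x).trans (le_of_eq ?_)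
        rw [_root_.abs_of_nonpos hx0]
        ring_nf
      · intro y hy0
        rw [habs]
        simp only [Complex.mul_I_re, Complex.mul_I_im, Complex.ofReal_re, Complex.ofReal_im,
          neg_zero, mul_zero, zero_sub]
        apply hfwd
        refine (him y).trans (le_of_eq ?_)
        rw [_root_.abs_of_nonneg hy0]
        ring_nf
    rw [habs] at h1
    have h2 := hback _ _ h1
    rw [_root_.abs_of_nonpos hx.le, _root_.abs_of_nonneg hy]
    calc ‖F z‖ ≤ A * expR (-(σ * z.re - -τ * z.im)) := h2
      _ = A * expR (σ * -z.re - τ * z.im) := by ring_nf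
  · -- quadrant III : x ≤ 0, y ≤ 0 : want -σx + τ y ; s = σ, t = τ : s x - t y = σx - τ y
    have h1 : ‖F z * Complex.exp ((((σ:ℝ):ℂ) + ((τ:ℝ):ℂ)*I) * z)‖ ≤ A := by
      apply PhragmenLindelof.quadrant_III (hd _ _ _) (hO _ _ _) ?_ ?_ hx.le hy.le
      · intro x hx0
        rw [habs]
        simp only [Complex.ofReal_re, Complex.ofReal_im, mul_zero, sub_zero]
        apply hfwd
        refine (hre x).trans (le_of_eq ?_)
        rw [_root_.abs_of_nonpos hx0]
        ring_nf
      · intro y hy0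
        rw [habs]
        simp only [Complex.mul_I_re, Complex.mul_I_im, Complex.ofReal_re, Complex.ofReal_im,
          neg_zero, mul_zero, zero_sub]
        apply hfwd
        refine (him y).trans (le_of_eq ?_)
        rw [_root_.abs_of_nonpos hy0]
        ring_nf
    rw [habs] at h1
    have h2 := hback _ _ h1
    rw [_root_.abs_of_nonpos hx.le, _root_.abs_of_nonpos hy.le]
    calc ‖F z‖ ≤ A * expR (-(σ * z.re - τ * z.im)) := h2
      _ = A * expR (σ * -z.re - τ * -z.im) := by ring_nf

lemma carlson_step2_pos (F : ℂ → ℂ) (hF : Differentiable ℂ F) (A σ τ : ℝ) (hτ : 0 ≤ τ)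
    (hbound : ∀ z : ℂ, ‖F z‖ ≤ A * expR (σ * |z.re| - τ * |z.im|)) :
    ∀ x : ℝ, 0 ≤ x → ‖F ((x:ℝ):ℂ)‖ ≤ A * expR ((σ - τ) * x) := by
  intro x hx0
  set l : ℝ := σ - τ with hl
  set c : ℂ := -(l:ℂ) * (1 - I) with hc
  set H : ℂ → ℂ := fun w => F ((1 - I) * w) * Complex.exp (c * w) with hH
  have hA : 0 ≤ A := by
    have := (norm_nonneg (F 0)).trans (hbound 0)
    nlinarith [Real.exp_pos (σ * |(0:ℂ).re| - τ * |(0:ℂ).im|)]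
  have hcre : c.re = -l := by simp [hc]
  have hcim : c.im = l := by simp [hc]
  have habs1mI : ‖1 - I‖ ≤ 2 := by
    calc ‖1 - I‖ ≤ ‖(1:ℂ)‖ + ‖I‖ := by
          exact norm_sub_le (1:ℂ) I
      _ = 2 := by norm_num
  have hHabs : ∀ w : ℂ, ‖H w‖ = ‖F ((1 - I) * w)‖ * expR ((c * w).re) := by
    intro w
    rw [hH, norm_mul, Complex.norm_exp]
  have hHd : Differentiable ℂ H :=
    (hF.comp (differentiable_id.const_mul _)).mul ((differentiable_id.const_mul c).cexp)
  have hgrow : ∀ w : ℂ, ‖H w‖ ≤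
      A * expR ((2 * |σ| + ‖c‖) * ‖w‖) := by
    intro w
    rw [hHabs]
    have h3 : ‖(1 - I) * w‖ ≤ 2 * ‖w‖ := by
      rw [norm_mul]
      exact mul_le_mul_of_nonneg_right habs1mI (norm_nonneg w)
    have h1 : ‖F ((1 - I) * w)‖ ≤ A * expR (2 * |σ| * ‖w‖) := by
      refine (hbound _).trans ?_
      apply mul_le_mul_of_nonneg_left _ hA
      apply Real.exp_le_exp.2
      have h2 : |((1 - I) * w).re| ≤ 2 * ‖w‖ := (Complex.abs_re_le_norm _).trans h3
      have h4 : σ * |((1 - I) * w).re| ≤ 2 * |σ| * ‖w‖ := by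
        calc σ * |((1 - I) * w).re| ≤ |σ| * |((1 - I) * w).re| :=
              mul_le_mul_of_nonneg_right (le_abs_self σ) (abs_nonneg _)
          _ ≤ |σ| * (2 * ‖w‖) := mul_le_mul_of_nonneg_left h2 (abs_nonneg σ)
          _ = 2 * |σ| * ‖w‖ := by ring
      nlinarith [abs_nonneg (((1 - I) * w).im)]
    have h5 : (c * w).re ≤ ‖c‖ * ‖w‖ := by
      calc (c * w).re ≤ ‖c * w‖ := Complex.re_le_norm _
        _ = ‖c‖ * ‖w‖ := norm_mul _ _
    calc ‖F ((1 - I) * w)‖ * expR ((c * w).re)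
        ≤ (A * expR (2 * |σ| * ‖w‖)) * expR (‖c‖ * ‖w‖) :=
          mul_le_mul h1 (Real.exp_le_exp.2 h5) (Real.exp_pos _).le (by positivity)
      _ = A * expR (2 * |σ| * ‖w‖ + ‖c‖ * ‖w‖) := by
          rw [Real.exp_add]; ring
      _ = A * expR ((2 * |σ| + ‖c‖) * ‖w‖) := by ring_nf
  have key : ‖H (((x/2 : ℝ):ℂ) * (1 + I))‖ ≤ A := by
    apply PhragmenLindelof.quadrant_I hHd.diffContOnCl
      (carlson_bigO H A (2 * |σ| + ‖c‖) hgrow _) ?_ ?_ ?_ ?_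
    · -- real boundary
      intro a ha0
      rw [hHabs]
      have hζre : ((1 - I) * (a:ℂ)).re = a := by simp
      have hζim : ((1 - I) * (a:ℂ)).im = -a := by simp
      have hcw : (c * (a:ℂ)).re = -l * a := by
        rw [Complex.mul_re, hcre, hcim]
        simp
      have hb := hbound ((1 - I) * (a:ℂ))
      rw [hζre, hζim, abs_neg, _root_.abs_of_nonneg ha0] at hb
      calc ‖F ((1 - I) * (a:ℂ))‖ * expR ((c * (a:ℂ)).re)
          ≤ (A * expR (σ * a - τ * a)) * expR ((c * (a:ℂ)).re) :=
            mul_le_mul_of_nonneg_right hb (Real.exp_pos _).le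
        _ = A * expR ((σ * a - τ * a) + (c * (a:ℂ)).re) := by rw [Real.exp_add]; ring
        _ = A := by
            rw [hcw, hl]
            ring_nf
            rw [Real.exp_zero, mul_one]
    · -- imaginary boundary
      intro b hb0
      rw [hHabs]
      have hζre : ((1 - I) * ((b:ℂ) * I)).re = b := by
        simp [Complex.mul_re, Complex.mul_im]
      have hζim : ((1 - I) * ((b:ℂ) * I)).im = b := by
        simp [Complex.mul_re, Complex.mul_im]
      have hcw : (c * ((b:ℂ) * I)).re = -l * b := by
        rw [show c * ((b:ℂ) * I) = c * I * b by ring, Complex.mul_re]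
        simp [Complex.mul_re, Complex.mul_im, hcre, hcim]
      have hb := hbound ((1 - I) * ((b:ℂ) * I))
      rw [hζre, hζim, _root_.abs_of_nonneg hb0] at hb
      calc ‖F ((1 - I) * ((b:ℂ) * I))‖ * expR ((c * ((b:ℂ) * I)).re)
          ≤ (A * expR (σ * b - τ * b)) * expR ((c * ((b:ℂ) * I)).re) :=
            mul_le_mul_of_nonneg_right hb (Real.exp_pos _).le
        _ = A * expR ((σ * b - τ * b) + (c * ((b:ℂ) * I)).re) := by rw [Real.exp_add]; ring
        _ = A := by
            rw [hcw, hl]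
            ring_nf
            rw [Real.exp_zero, mul_one]
    · simp [Complex.mul_re]
      positivity
    · simp [Complex.mul_im]
      positivity
  -- now unpack at the specific point
  have h2I : ((1:ℂ) - I) * (((x/2 : ℝ):ℂ) * (1 + I)) = ((x:ℝ):ℂ) := by
    have hii : ((1:ℂ) - I) * (1 + I) = 2 := by
      have := Complex.I_mul_I
      ring_nf
      rw [Complex.I_sq]
      ring
    calc ((1:ℂ) - I) * (((x/2 : ℝ):ℂ) * (1 + I)) = ((x/2 : ℝ):ℂ) * (((1:ℂ) - I) * (1 + I)) := by
          ring
      _ = ((x/2 : ℝ):ℂ) * 2 := by rw [hii]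
      _ = ((x:ℝ):ℂ) := by push_cast; ring
  rw [hHabs, h2I] at key
  have hcw₀ : (c * (((x/2 : ℝ):ℂ) * (1 + I))).re = -l * x := by
    have : c * (((x/2 : ℝ):ℂ) * (1 + I)) = ((x/2 : ℝ):ℂ) * (c * (1 + I)) := by ring
    rw [this]
    have hc2 : c * (1 + I) = -(l:ℂ) * ((1 - I) * (1 + I)) := by rw [hc]; ring
    have hii : ((1:ℂ) - I) * (1 + I) = 2 := by
      ring_nf
      rw [Complex.I_sq]
      ring
    rw [hc2, hii]
    rw [show -(l:ℂ) * 2 = ((-2*l : ℝ):ℂ) by push_cast; ring]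
    rw [← Complex.ofReal_mul]
    rw [Complex.ofReal_re]
    ring
  rw [hcw₀] at key
  -- key : abs (F x) * expR (-l * x) ≤ A
  have := mul_le_mul_of_nonneg_right key (Real.exp_pos (l * x)).le
  calc ‖F ((x:ℝ):ℂ)‖ = ‖F ((x:ℝ):ℂ)‖ * expR (-l * x) * expR (l * x) := by
        rw [mul_assoc, ← Real.exp_add]; simp
    _ ≤ A * expR (l * x) := this
    _ = A * expR ((σ - τ) * x) := by rw [hl]

noncomputable def carlsonF (g : ℂ → ℂ) : ℂ → ℂ := fun z =>
  if Complex.sin ((π:ℂ)*z) = 0 then deriv g z / ((π:ℂ) * Complex.cos ((π:ℂ)*z))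
  else g z / Complex.sin ((π:ℂ)*z)

lemma carlsonF_eq (g : ℂ → ℂ) (z : ℂ) (h : Complex.sin ((π:ℂ)*z) ≠ 0) :
    carlsonF g z = g z / Complex.sin ((π:ℂ)*z) := by
  rw [carlsonF, if_neg h]

lemma carlson_sin_zero_iff (z : ℂ) :
    Complex.sin ((π:ℂ)*z) = 0 ↔ ∃ n : ℤ, z = (n:ℂ) := by
  rw [Complex.sin_eq_zero_iff]
  have hπ : ((π:ℝ):ℂ) ≠ 0 := Complex.ofReal_ne_zero.2 Real.pi_ne_zero
  constructor
  · rintro ⟨k, hk⟩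
    refine ⟨k, mul_left_cancel₀ hπ ?_⟩
    linear_combination hk
  · rintro ⟨n, rfl⟩
    exact ⟨n, by ring⟩

lemma carlson_mul (g : ℂ → ℂ) (hgz : ∀ n : ℤ, g n = 0) (z : ℂ) :
    g z = Complex.sin ((π:ℂ)*z) * carlsonF g z := by
  by_cases h : Complex.sin ((π:ℂ)*z) = 0
  · rw [h, zero_mul]
    obtain ⟨n, rfl⟩ := (carlson_sin_zero_iff z).1 h
    exact hgz n
  · rw [carlsonF_eq g z h, mul_div_cancel₀ _ h]

lemma carlson_int_dist (m n : ℤ) (h : m ≠ n) : 1 ≤ ‖(m:ℂ) - (n:ℂ)‖ := by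
  have h1 : ((m:ℂ) - (n:ℂ)) = ((m - n : ℤ) : ℂ) := by push_cast; ring
  rw [h1, Complex.norm_intCast]
  have : (1:ℤ) ≤ |m - n| := Int.one_le_abs (sub_ne_zero.2 h)
  exact_mod_cast this

lemma carlson_sinpi_diff : Differentiable ℂ (fun z : ℂ => Complex.sin ((π:ℂ)*z)) :=
  Complex.differentiable_sin.comp (differentiable_id.const_mul _)

lemma carlson_cos_ne (n : ℤ) : Complex.cos ((π:ℂ)*(n:ℂ)) ≠ 0 := by
  intro hcos
  rw [Complex.cos_eq_zero_iff] at hcos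
  obtain ⟨k, hk⟩ := hcos
  have : ((π * n : ℝ) : ℂ) = (((2*k+1) * π / 2 : ℝ) : ℂ) := by push_cast at hk ⊢; linear_combination hk
  have h2 : (π * n : ℝ) = (2*k+1) * π / 2 := by exact_mod_cast this
  have hπ : (0:ℝ) < π := Real.pi_pos
  have h3 : (n:ℝ) = (2*k+1)/2 := by
    field_simp at h2 ⊢
    nlinarith [h2]
  have h4 : (2*n : ℝ) = 2*k+1 := by linarith
  have h5 : (2*n : ℤ) = 2*k+1 := by exact_mod_cast h4
  omega

lemma carlsonF_deriv_sin (z₀ : ℂ) :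
    deriv (fun z : ℂ => Complex.sin ((π:ℂ)*z)) z₀ = Complex.cos ((π:ℂ)*z₀) * (π:ℂ) := by
  have h1 : HasDerivAt (fun z : ℂ => (π:ℂ)*z) ((π:ℂ)) z₀ := by
    simpa using (hasDerivAt_id z₀).const_mul ((π:ℝ):ℂ)
  have h2 := (Complex.hasDerivAt_sin ((π:ℂ)*z₀)).comp z₀ h1
  exact h2.deriv

lemma carlsonF_diff (g : ℂ → ℂ) (hg : Differentiable ℂ g) (hgz : ∀ n : ℤ, g n = 0) :
    Differentiable ℂ (carlsonF g) := by
  intro z₀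
  by_cases h : Complex.sin ((π:ℂ)*z₀) = 0
  · -- removable singularity via dslope
    obtain ⟨n, rfl⟩ := (carlson_sin_zero_iff z₀).1 h
    set z₀ : ℂ := (n:ℂ)
    set φ : ℂ → ℂ := dslope g z₀ with hφ
    set ψ : ℂ → ℂ := dslope (fun z : ℂ => Complex.sin ((π:ℂ)*z)) z₀ with hψ
    have hφd : DifferentiableAt ℂ φ z₀ := by
      obtain ⟨p, hp⟩ := hg.analyticAt z₀
      exact hp.has_fpower_series_dslope_fslope.analyticAt.differentiableAt
    have hψd : DifferentiableAt ℂ ψ z₀ := by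
      obtain ⟨p, hp⟩ := carlson_sinpi_diff.analyticAt z₀
      exact hp.has_fpower_series_dslope_fslope.analyticAt.differentiableAt
    have hψ0 : ψ z₀ = Complex.cos ((π:ℂ)*z₀) * (π:ℂ) := by
      rw [hψ, dslope_same, carlsonF_deriv_sin]
    have hψne : ψ z₀ ≠ 0 := by
      rw [hψ0]
      exact mul_ne_zero (carlson_cos_ne n) (Complex.ofReal_ne_zero.2 Real.pi_ne_zero)
    have hquot : DifferentiableAt ℂ (fun z => φ z / ψ z) z₀ := hφd.div hψd hψne
    have hev : (fun z => φ z / ψ z) =ᶠ[nhds z₀] carlsonF g := by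
      have hball : Metric.ball z₀ 1 ∈ nhds z₀ := Metric.ball_mem_nhds _ one_pos
      filter_upwards [hball] with z hz
      rcases eq_or_ne z z₀ with rfl | hne
      · rw [carlsonF, if_pos h, hφ, dslope_same, hψ0]
        congr 1
        ring
      · have hsinz : Complex.sin ((π:ℂ)*z) ≠ 0 := by
          intro hs
          obtain ⟨m, rfl⟩ := (carlson_sin_zero_iff z).1 hs
          have hmn : m ≠ n := fun hmn => hne (by rw [hmn])
          have := carlson_int_dist m n hmn
          rw [Metric.mem_ball, Complex.dist_eq] at hz
          linarith
        rw [carlsonF_eq g z hsinz]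
        rw [hφ, dslope_of_ne _ hne, hψ, dslope_of_ne _ hne]
        rw [slope_def_field, slope_def_field]
        have hz₀ : g z₀ = 0 := hgz n
        have hs₀ : Complex.sin ((π:ℂ)*z₀) = 0 := h
        rw [hz₀, hs₀, sub_zero, sub_zero]
        have hzne : z - z₀ ≠ 0 := sub_ne_zero.2 hne
        field_simp
    exact (Filter.EventuallyEq.differentiableAt_iff hev).1 hquot
  · -- regular point
    have hU : IsOpen {z : ℂ | Complex.sin ((π:ℂ)*z) ≠ 0} := by
      have : Continuous (fun z : ℂ => Complex.sin ((π:ℂ)*z)) := carlson_sinpi_diff.continuous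
      exact isOpen_ne.preimage this
    have hev : (fun z => g z / Complex.sin ((π:ℂ)*z)) =ᶠ[nhds z₀] carlsonF g := by
      filter_upwards [hU.mem_nhds h] with z hz
      exact (carlsonF_eq g z hz).symm
    have hquot : DifferentiableAt ℂ (fun z => g z / Complex.sin ((π:ℂ)*z)) z₀ :=
      (hg z₀).div (carlson_sinpi_diff z₀) h
    exact (Filter.EventuallyEq.differentiableAt_iff hev).1 hquot

lemma carlson_base (g : ℂ → ℂ) (hg : Differentiable ℂ g) (c' σ' : ℝ) (hc : 0 < c')
    (hσ'0 : 0 ≤ σ') (hσ' : σ' < π)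
    (hgb : ∀ z : ℂ, ‖g z‖ ≤ c' * expR (σ' * ‖z‖))
    (hgz : ∀ n : ℤ, g n = 0) :
    ∀ z : ℂ, ‖carlsonF g z‖ ≤
      (8*c'*expR (2*σ' + π)) * expR (σ' * |z.re| - (π - σ') * |z.im|) := by
  intro z
  have hπ : (0:ℝ) < π := Real.pi_pos
  rcases le_or_gt (1/8 : ℝ) |z.im| with hy | hy
  · -- away from the real axis
    have hsl := carlson_sin_lower z hy
    have hsne : Complex.sin ((π:ℂ)*z) ≠ 0 := by
      intro h0
      rw [h0] at hsl
      simp only [norm_zero] at hsl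
      nlinarith [Real.exp_pos (π * |z.im|)]
    rw [carlsonF_eq g z hsne, norm_div]
    have hspos : (0:ℝ) < ‖Complex.sin ((π:ℂ)*z)‖ := by
      nlinarith [Real.exp_pos (π * |z.im|)]
    rw [div_le_iff₀ hspos]
    have hzle : ‖z‖ ≤ |z.re| + |z.im| := Complex.norm_le_abs_re_add_abs_im z
    have hg1 : ‖g z‖ ≤ c' * expR (σ' * (|z.re| + |z.im|)) := by
      refine (hgb z).trans ?_
      apply mul_le_mul_of_nonneg_left _ hc.le
      exact Real.exp_le_exp.2 (mul_le_mul_of_nonneg_left hzle hσ'0)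
    calc ‖g z‖ ≤ c' * expR (σ' * (|z.re| + |z.im|)) := hg1
      _ = (4 * c' * expR (σ' * |z.re| - (π - σ') * |z.im|)) * (expR (π * |z.im|) / 4) := by
          have hE : expR (σ' * |z.re| - (π - σ') * |z.im|) * expR (π * |z.im|)
              = expR (σ' * (|z.re| + |z.im|)) := by
            rw [← Real.exp_add]; ring_nf
          rw [← hE]; ring
      _ ≤ (8*c'*expR (2*σ' + π)) * expR (σ' * |z.re| - (π - σ') * |z.im|)
            * ‖Complex.sin ((π:ℂ)*z)‖ := by
          have h8 : (4:ℝ) * c' ≤ 8*c'*expR (2*σ' + π) := by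
            nlinarith [Real.one_le_exp (show (0:ℝ) ≤ 2*σ' + π by positivity)]
          have e1 : (0:ℝ) < expR (σ' * |z.re| - (π - σ') * |z.im|) := Real.exp_pos _
          calc (4 * c' * expR (σ' * |z.re| - (π - σ') * |z.im|)) * (expR (π * |z.im|) / 4)
              ≤ (8*c'*expR (2*σ' + π) * expR (σ' * |z.re| - (π - σ') * |z.im|))
                  * (expR (π * |z.im|) / 4) := by
                apply mul_le_mul_of_nonneg_right _ (by positivity)
                apply mul_le_mul_of_nonneg_right h8 e1.le
            _ ≤ _ := by
                apply mul_le_mul_of_nonneg_left hsl (by positivity)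
  · -- near the real axis : maximum modulus over a disc centred at round z.re
    set n : ℤ := round z.re with hn
    have hnz : |z.re - (n:ℝ)| ≤ 1/2 := abs_sub_round z.re
    have hmem : z ∈ closure (Metric.ball ((n:ℤ):ℂ) (5/8)) := by
      rw [closure_ball ((n:ℤ):ℂ) (by norm_num : (5/8 : ℝ) ≠ 0), Metric.mem_closedBall,
        Complex.dist_eq]
      have h1 : ‖z - (n:ℂ)‖ ≤ |(z - (n:ℂ)).re| + |(z - (n:ℂ)).im| :=
        Complex.norm_le_abs_re_add_abs_im _
      have h2 : (z - (n:ℂ)).re = z.re - (n:ℝ) := by simp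
      have h3 : (z - (n:ℂ)).im = z.im := by simp
      rw [h2, h3] at h1
      linarith
    have hCb : ∀ w ∈ frontier (Metric.ball ((n:ℤ):ℂ) (5/8)),
        ‖carlsonF g w‖ ≤ 2 * c' * expR (2*σ') * expR (σ' * |z.re|) := by
      intro w hw
      rw [frontier_ball ((n:ℤ):ℂ) (by norm_num : (5/8 : ℝ) ≠ 0), Metric.mem_sphere,
        Complex.dist_eq] at hw
      have hs := carlson_sin_sphere n w hw
      have hsne : Complex.sin ((π:ℂ)*w) ≠ 0 := by
        intro h0; rw [h0] at hs; simp at hs; linarith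
      rw [carlsonF_eq g w hsne, norm_div]
      have habsw : ‖w‖ ≤ |z.re| + 2 := by
        have h1 : ‖w‖ ≤ ‖(n:ℂ)‖ + ‖w - (n:ℂ)‖ := by
          calc ‖w‖ = ‖(n:ℂ) + (w - (n:ℂ))‖ := by ring_nf
            _ ≤ _ := norm_add_le _ _
        have h2 : ‖(n:ℂ)‖ = |(n:ℝ)| := by
          rw [Complex.norm_intCast]
        have h3 : |(n:ℝ)| ≤ |z.re| + 1/2 := by
          rcases abs_cases (z.re - (n:ℝ)) with ⟨h, _⟩|⟨h, _⟩ <;>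
            rcases abs_cases z.re with ⟨h', _⟩|⟨h', _⟩ <;>
            rcases abs_cases ((n:ℝ)) with ⟨h'', _⟩|⟨h'', _⟩ <;> linarith
        rw [h2, hw] at h1
        linarith
      have hgw : ‖g w‖ ≤ c' * expR (σ' * (|z.re| + 2)) := by
        refine (hgb w).trans ?_
        apply mul_le_mul_of_nonneg_left _ hc.le
        exact Real.exp_le_exp.2 (mul_le_mul_of_nonneg_left habsw hσ'0)
      have hs2 : (1:ℝ)/2 ≤ ‖Complex.sin ((π:ℂ)*w)‖ := hs
      calc ‖g w‖ / ‖Complex.sin ((π:ℂ)*w)‖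
          ≤ (c' * expR (σ' * (|z.re| + 2))) / (1/2) := by
            exact div_le_div₀ (by positivity) hgw (by norm_num) hs2
        _ = 2 * c' * expR (2*σ') * expR (σ' * |z.re|) := by
            have hE : expR (σ' * (|z.re| + 2)) = expR (2*σ') * expR (σ' * |z.re|) := by
              rw [← Real.exp_add]; ring_nf
            rw [hE]; ring
    have hmax := Complex.norm_le_of_forall_mem_frontier_norm_le Metric.isBounded_ball
      ((carlsonF_diff g hg hgz).diffContOnCl) hCb hmem
    refine hmax.trans ?_
    have h1 : (1:ℝ) ≤ expR (π - (π - σ') * |z.im|) := by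
      apply Real.one_le_exp
      nlinarith [abs_nonneg z.im]
    have e1 : expR (2*σ') * expR (σ' * |z.re|) = expR (2*σ' + σ' * |z.re|) :=
      (Real.exp_add _ _).symm
    have e2 : expR (2*σ' + π) * expR (σ' * |z.re| - (π - σ') * |z.im|)
        = expR (2*σ' + π + (σ' * |z.re| - (π - σ') * |z.im|)) := (Real.exp_add _ _).symm
    have e3 : expR (2*σ' + σ' * |z.re|)
        ≤ expR (2*σ' + π + (σ' * |z.re| - (π - σ') * |z.im|)) := by
      apply Real.exp_le_exp.2
      nlinarith [abs_nonneg z.im]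
    calc 2*c'*expR (2*σ') * expR (σ' * |z.re|)
        = 2*c' * (expR (2*σ') * expR (σ' * |z.re|)) := by ring
      _ = 2*c' * expR (2*σ' + σ' * |z.re|) := by rw [e1]
      _ ≤ 8*c' * expR (2*σ' + π + (σ' * |z.re| - (π - σ') * |z.im|)) := by
          nlinarith [Real.exp_pos (2*σ' + σ' * |z.re|),
            Real.exp_pos (2*σ' + π + (σ' * |z.re| - (π - σ') * |z.im|)), e3]
      _ = 8*c'*expR (2*σ' + π) * expR (σ' * |z.re| - (π - σ') * |z.im|) := by
          rw [← e2]; ring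

/-- Quantitative Cartwright/Carlson theorem: an entire function of exponential
type strictly less than π which is constant on the integers is constant. -/
theorem carlson_type_lt_pi_const_on_int
    (f : ℂ → ℂ) (hf : Differentiable ℂ f)
    (c σ' : ℝ) (hc : 0 < c) (hσ'0 : 0 ≤ σ') (hσ' : σ' < Real.pi)
    (hgrowth : ∀ z : ℂ, ‖f z‖ ≤ c * Real.exp (σ' * ‖z‖))
    (hint : ∀ n : ℤ, f n = f 0) :
    ∀ z : ℂ, f z = f 0 := by
  set τ : ℝ := π - σ' with hτdef
  have hτ : 0 < τ := by rw [hτdef]; linarith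
  set g : ℂ → ℂ := fun z => f z - f 0 with hgdef
  have hg : Differentiable ℂ g := hf.sub_const _
  have hgz : ∀ n : ℤ, g n = 0 := fun n => by
    simp only [hgdef]
    rw [hint n, sub_self]
  have hgb : ∀ z : ℂ, ‖g z‖ ≤ (2*c) * expR (σ' * ‖z‖) := by
    intro z
    have h0 : ‖f 0‖ ≤ c := by
      have := hgrowth 0
      simpa using this
    have h1 : (1:ℝ) ≤ expR (σ' * ‖z‖) := Real.one_le_exp (by positivity)
    calc ‖g z‖ ≤ ‖f z‖ + ‖f 0‖ := by
          show ‖f z - f 0‖ ≤ _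
          simpa using norm_sub_le (f z) (f 0)
      _ ≤ c * expR (σ' * ‖z‖) + c := by
          have := hgrowth z; linarith
      _ ≤ (2*c) * expR (σ' * ‖z‖) := by nlinarith
  set F : ℂ → ℂ := carlsonF g with hFdef
  have hF : Differentiable ℂ F := carlsonF_diff g hg hgz
  set A : ℝ := 8*(2*c)*expR (2*σ' + π) with hAdef
  have hA0 : 0 < A := by rw [hAdef]; positivity
  have base : ∀ z : ℂ, ‖F z‖ ≤ A * expR (σ' * |z.re| - τ * |z.im|) := by
    intro z
    exact carlson_base g hg (2*c) σ' (by linarith) hσ'0 hσ' hgb hgz z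
  have main : ∀ n : ℕ, ∀ z : ℂ,
      ‖F z‖ ≤ A * expR ((σ' - n*τ) * |z.re| - τ * |z.im|) := by
    intro n
    induction n with
    | zero => simpa using base
    | succ n ih =>
      set σn : ℝ := σ' - n*τ with hσn
      have hgrow : ∀ z : ℂ, ‖F z‖ ≤ A * expR (|σn| * ‖z‖) := by
        intro z
        refine (ih z).trans ?_
        apply mul_le_mul_of_nonneg_left _ hA0.le
        apply Real.exp_le_exp.2
        have h1 : σn * |z.re| ≤ |σn| * ‖z‖ := by
          calc σn * |z.re| ≤ |σn| * |z.re| :=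
                mul_le_mul_of_nonneg_right (le_abs_self _) (abs_nonneg _)
            _ ≤ |σn| * ‖z‖ :=
                mul_le_mul_of_nonneg_left (Complex.abs_re_le_norm z) (abs_nonneg _)
        nlinarith [abs_nonneg z.im, hτ.le]
      have hre2 : ∀ x : ℝ, ‖F ((x:ℝ):ℂ)‖ ≤ A * expR ((σn - τ) * |x|) := by
        intro x
        rcases le_or_gt 0 x with hx | hx
        · have := carlson_step2_pos F hF A σn τ hτ.le ih x hx
          rwa [_root_.abs_of_nonneg hx]
        · have hb2 : ∀ z : ℂ, ‖(fun z => F (-z)) z‖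
              ≤ A * expR (σn * |z.re| - τ * |z.im|) := by
            intro z
            have := ih (-z)
            simpa [abs_neg] using this
          have h3 := carlson_step2_pos (fun z => F (-z)) (hF.comp differentiable_neg)
            A σn τ hτ.le hb2 (-x) (by linarith)
          rw [_root_.abs_of_nonpos hx.le]
          have h4 : ((-x : ℝ) : ℂ) = -((x:ℝ):ℂ) := by push_cast; ring
          rw [h4] at h3
          simpa using h3
      have him2 : ∀ y : ℝ, ‖F ((y:ℂ) * I)‖ ≤ A * expR (-τ * |y|) := by
        intro y
        have := ih ((y:ℂ) * I)
        simpa [Complex.mul_I_re, Complex.mul_I_im] using this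
      have hstep := carlson_step1 F hF A (|σn|) (σn - τ) τ hgrow hre2 him2
      intro z
      have h := hstep z
      have heq : (σn - τ) * |z.re| - τ * |z.im| = (σ' - (n+1 : ℕ)*τ) * |z.re| - τ * |z.im| := by
        rw [hσn]; push_cast; ring
      rwa [heq] at h
  set N : ℕ := ⌈σ'/τ⌉₊ with hN
  have hσneg : σ' - (N:ℝ)*τ ≤ 0 := by
    have h1 : σ'/τ ≤ (N:ℝ) := Nat.le_ceil _
    have h2 : σ' ≤ (N:ℝ)*τ := by
      rw [div_le_iff₀ hτ] at h1
      linarith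
    linarith
  -- conclude F ≡ 0
  have bounded : ∀ z : ℂ, ‖F z‖ ≤ A := by
    intro z
    refine (main N z).trans ?_
    have hexp : (σ' - N*τ) * |z.re| - τ * |z.im| ≤ 0 := by
      nlinarith [abs_nonneg z.re, abs_nonneg z.im, hτ.le]
    calc A * expR ((σ' - N*τ) * |z.re| - τ * |z.im|) ≤ A * 1 := by
          apply mul_le_mul_of_nonneg_left _ hA0.le
          exact Real.exp_le_one_iff.2 hexp
      _ = A := mul_one A
  have hb : IsBounded (Set.range F) := by
    rw [isBounded_iff_forall_norm_le]
    exact ⟨A, by rintro w ⟨z, rfl⟩; exact bounded z⟩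
  have hF0 : ∀ z : ℂ, F z = 0 := by
    intro z
    have hy : ∀ y : ℝ, 0 ≤ y → ‖F z‖ ≤ A * expR (-(τ * y)) := by
      intro y hy0
      rw [hF.apply_eq_apply_of_bounded hb z ((y:ℂ) * I)]
      refine (main N ((y:ℂ)*I)).trans (le_of_eq ?_)
      congr 1
      simp [Complex.mul_I_re, Complex.mul_I_im, _root_.abs_of_nonneg hy0]
    have hlim : Tendsto (fun y : ℝ => A * expR (-(τ * y))) atTop (𝓝 0) := by
      have h1 : Tendsto (fun y : ℝ => -(τ * y)) atTop atBot := by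
        exact tendsto_neg_atTop_atBot.comp (Tendsto.const_mul_atTop hτ tendsto_id)
      have h2 := Real.tendsto_exp_atBot.comp h1
      have h3 := h2.const_mul A
      simpa using h3
    have hle : ‖F z‖ ≤ 0 := by
      apply ge_of_tendsto hlim
      filter_upwards [eventually_ge_atTop (0:ℝ)] with y hy0
      exact hy y hy0
    have := norm_nonneg (F z)
    have h0 : ‖F z‖ = 0 := le_antisymm hle this
    exact norm_eq_zero.1 h0
  intro z
  have := carlson_mul g hgz z
  have h6 : carlsonF g z = 0 := hF0 z
  rw [h6, mul_zero] at this
  have h5 : f z - f 0 = 0 := this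
  exact sub_eq_zero.1 h5
end

section
/- Let f : ℂⁿ → ℂ be an entire function such that for every ε > 0 there exists a constant c(ε) > 0 with |f(z)| ≤ c(ε)·exp(ε·‖z‖) for all z ∈ ℂⁿ. Suppose v ∈ ℂⁿ is a nonzero vector such that f(z + v) = f(z) for all z ∈ ℂⁿ. Then f(z + w·v) = f(z) for all z ∈ ℂⁿ and all complex scalars w ∈ ℂ; that is, f is constant along every complex line in the direction v. -/
open Complex Set Filter Asymptotics Metric Bornology Topology

private lemma key_congr {g : ℂ → ℂ} (hper : ∀ w, g (w + 1) = g w)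
    {w w' : ℂ} (h : Complex.exp (2 * Real.pi * I * w) = Complex.exp (2 * Real.pi * I * w')) :
    g w = g w' := by
  have hper' : ∀ (k : ℤ) (w : ℂ), g (w + k) = g w := by
    intro k
    induction k using Int.induction_on with
    | zero => simp
    | succ i ih =>
      intro w
      have h1 : ((i : ℤ) + 1 : ℂ) = (i : ℂ) + 1 := by push_cast; ring
      have := hper (w + i)
      calc g (w + ((i : ℤ) + 1 : ℤ)) = g ((w + i) + 1) := by push_cast; ring_nf
        _ = g (w + i) := hper _
        _ = g w := ih w
    | pred i ih =>
      intro w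
      have h2 : g ((w + (-(i : ℤ) - 1 : ℤ)) + 1) = g (w + (-(i : ℤ) - 1 : ℤ)) := hper _
      have h3 : (w + (-(i : ℤ) - 1 : ℤ)) + 1 = w + (-(i : ℤ) : ℤ) := by push_cast; ring
      rw [h3, ih w] at h2
      exact h2.symm
  have hπ : (2 * (Real.pi : ℂ) * I : ℂ) ≠ 0 := by
    simp [Real.pi_ne_zero, Complex.I_ne_zero]
  obtain ⟨n, hn⟩ := Complex.exp_eq_exp_iff_exists_int.mp h
  have hw : w = w' + n := by
    apply mul_left_cancel₀ hπ
    rw [hn]; ring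
  rw [hw]
  exact hper' n w'

/-- Extension of a function differentiable off `0` with an `o(z⁻¹)`-type bound. -/
private lemma extend_entire (φ : ℂ → ℂ) (hd : ∀ q : ℂ, q ≠ 0 → DifferentiableAt ℂ φ q)
    (C : ℝ)
    (hb : ∀ q : ℂ, q ≠ 0 →
      ‖φ q‖ ≤ C * Real.exp (|Real.log (‖q‖)| / 2)) :
    ∃ ψ : ℂ → ℂ, Differentiable ℂ ψ ∧ ∀ q : ℂ, q ≠ 0 → ψ q = φ q := by
  have hsd : DifferentiableOn ℂ φ ({0}ᶜ : Set ℂ) := fun q hq =>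
    (hd q hq).differentiableWithinAt
  have hmem : ({0}ᶜ : Set ℂ) ∈ 𝓝[≠] (0 : ℂ) := self_mem_nhdsWithin
  -- the little-o estimate
  have habs : Tendsto (fun z : ℂ => ‖z‖) (𝓝[≠] (0:ℂ)) (𝓝[>] (0:ℝ)) := by
    apply tendsto_nhdsWithin_of_tendsto_nhds_of_eventually_within
    · have : Tendsto (fun z : ℂ => ‖z‖) (𝓝 (0:ℂ)) (𝓝 (0:ℝ)) := by
        simpa using (continuous_norm.tendsto (0:ℂ))
      exact this.mono_left nhdsWithin_le_nhds
    · filter_upwards [self_mem_nhdsWithin] with z hz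
      exact norm_pos_iff.mpr hz
  have hlog : Tendsto (fun z : ℂ => Real.log (‖z‖)) (𝓝[≠] (0:ℂ)) atBot :=
    Real.tendsto_log_nhdsGT_zero.comp habs
  have hhalf : Tendsto (fun z : ℂ => Real.exp (Real.log (‖z‖) / 2))
      (𝓝[≠] (0:ℂ)) (𝓝 0) :=
    Real.tendsto_exp_atBot.comp (hlog.atBot_div_const (by norm_num))
  have ho : (fun z : ℂ => φ z - φ 0) =o[𝓝[≠] (0:ℂ)] fun z : ℂ => (z - 0)⁻¹ := by
    rw [isLittleO_iff_tendsto']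
    · -- (φ z - φ 0) / (z-0)⁻¹ = (φ z - φ 0) * z → 0
      have hbnd : ∀ᶠ z : ℂ in 𝓝[≠] (0:ℂ),
          ‖(φ z - φ 0) / (z - 0)⁻¹‖ ≤
            C * Real.exp (Real.log (‖z‖) / 2) + ‖φ 0‖ * ‖z‖ := by
        filter_upwards [self_mem_nhdsWithin,
          eventually_nhdsWithin_of_eventually_nhds
            (Metric.eventually_nhds_iff.2 ⟨1, one_pos, fun {z} hz => hz⟩)] with z hz hz1
        have hz0 : z ≠ 0 := hz
        have habz : ‖z‖ ≤ 1 := by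
          have : dist z 0 < 1 := hz1
          simpa [Complex.dist_eq] using this.le
        have habz0 : 0 < ‖z‖ := norm_pos_iff.mpr hz0
        have hlogle : |Real.log (‖z‖)| = -Real.log (‖z‖) := by
          rw [abs_of_nonpos (Real.log_nonpos habz0.le habz)]
        have h1 : ‖(φ z - φ 0) / (z - 0)⁻¹‖ = ‖φ z - φ 0‖ * ‖z‖ := by
          rw [div_inv_eq_mul]; simp [norm_mul]
        rw [h1]
        have h2 : ‖φ z - φ 0‖ ≤ ‖φ z‖ + ‖φ 0‖ :=
          (norm_sub_le _ _)
        have h3 : ‖φ z‖ * ‖z‖ ≤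
            C * Real.exp (Real.log (‖z‖) / 2) := by
          have := hb z hz0
          calc ‖φ z‖ * ‖z‖
              ≤ (C * Real.exp (|Real.log (‖z‖)| / 2)) * ‖z‖ := by
                exact mul_le_mul_of_nonneg_right this habz0.le
            _ = C * (Real.exp (-Real.log (‖z‖) / 2) * ‖z‖) := by
                rw [hlogle]; ring
            _ = C * Real.exp (Real.log (‖z‖) / 2) := by
                congr 1
                rw [← Real.exp_log habz0]
                rw [← Real.exp_add]
                congr 1
                rw [Real.log_exp]
                ring
        calc ‖φ z - φ 0‖ * ‖z‖
            ≤ (‖φ z‖ + ‖φ 0‖) * ‖z‖ :=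
              mul_le_mul_of_nonneg_right h2 habz0.le
          _ = ‖φ z‖ * ‖z‖ + ‖φ 0‖ * ‖z‖ := by ring
          _ ≤ C * Real.exp (Real.log (‖z‖) / 2) + ‖φ 0‖ * ‖z‖ :=
              add_le_add_left h3 _
      have hlim : Tendsto (fun z : ℂ =>
          C * Real.exp (Real.log (‖z‖) / 2) + ‖φ 0‖ * ‖z‖)
          (𝓝[≠] (0:ℂ)) (𝓝 0) := by
        have l1 : Tendsto (fun z : ℂ => C * Real.exp (Real.log (‖z‖) / 2))
            (𝓝[≠] (0:ℂ)) (𝓝 0) := by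
          simpa using hhalf.const_mul C
        have l2 : Tendsto (fun z : ℂ => ‖φ 0‖ * ‖z‖)
            (𝓝[≠] (0:ℂ)) (𝓝 0) := by
          have := (habs.mono_right nhdsWithin_le_nhds).const_mul (‖φ 0‖)
          simpa using this
        simpa using l1.add l2
      exact squeeze_zero_norm' hbnd hlim
    · filter_upwards [self_mem_nhdsWithin] with z hz h0
      exact absurd (inv_eq_zero.mp h0) (sub_ne_zero.mpr hz)
  have := Complex.differentiableOn_update_limUnder_insert_of_isLittleO hmem hsd ho
  refine ⟨Function.update φ 0 (limUnder (𝓝[≠] (0:ℂ)) φ), ?_, ?_⟩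
  · rw [← differentiableOn_univ]
    have huniv : insert (0:ℂ) ({0}ᶜ : Set ℂ) = univ := by
      ext z; by_cases hz : z = 0 <;> simp [hz]
    rwa [huniv] at this
  · intro q hq
    exact Function.update_of_ne hq _ _

/-- A 1-periodic entire function of exponential type `< 2π` (here: bounded by
`c·exp(π‖w‖)`) is constant. -/
private lemma periodic_const (g : ℂ → ℂ) (hg : Differentiable ℂ g)
    (c : ℝ) (hc : 0 < c)
    (hgb : ∀ w : ℂ, ‖g w‖ ≤ c * Real.exp (Real.pi * ‖w‖))
    (hper : ∀ w, g (w + 1) = g w) (w : ℂ) : g w = g 0 := by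
  have hπ : (2 * (Real.pi : ℂ) * I : ℂ) ≠ 0 := by
    simp [Real.pi_ne_zero, Complex.I_ne_zero]
  set G0 : ℂ → ℂ := fun q => g (Complex.log q / (2 * (Real.pi : ℂ) * I)) with hG0def
  have hexp0 : ∀ q : ℂ, q ≠ 0 →
      Complex.exp (2 * (Real.pi : ℂ) * I * (Complex.log q / (2 * (Real.pi : ℂ) * I))) = q := by
    intro q hq
    rw [mul_div_cancel₀ _ hπ, Complex.exp_log hq]
  -- G0 is differentiable off 0
  have hG0diff : ∀ q : ℂ, q ≠ 0 → DifferentiableAt ℂ G0 q := by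
    intro q hq
    rcases em (q ∈ Complex.slitPlane) with hs | hs
    · exact (hg _).comp q ((Complex.differentiableAt_log hs).div_const _)
    · have hns : -q ∈ Complex.slitPlane := by
        rw [Complex.mem_slitPlane_iff] at hs ⊢
        push_neg at hs
        obtain ⟨h1, h2⟩ := hs
        simp only [Complex.neg_re, Complex.neg_im, neg_ne_zero]
        rcases lt_or_eq_of_le h1 with h | h
        · left; linarith
        · exfalso; exact hq (Complex.ext (by simp [h]) (by simp [h2]))
      set alt : ℂ → ℂ :=
        fun x => g ((Complex.log (-x) + (Real.pi : ℂ) * I) / (2 * (Real.pi : ℂ) * I)) with halt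
      have haltdiff : DifferentiableAt ℂ alt q := by
        apply (hg _).comp q
        apply DifferentiableAt.div_const
        exact ((Complex.differentiableAt_log hns).comp q (differentiable_neg _)).add_const _
      have hU : IsOpen {x : ℂ | -x ∈ Complex.slitPlane} :=
        Complex.isOpen_slitPlane.preimage continuous_neg
      have heq : ∀ x ∈ {x : ℂ | -x ∈ Complex.slitPlane}, G0 x = alt x := by
        intro x hx
        have hxne : -x ≠ 0 := Complex.slitPlane_ne_zero hx
        have hx0 : x ≠ 0 := fun h => hxne (by simp [h])
        apply key_congr hper
        rw [hexp0 x hx0, mul_div_cancel₀ _ hπ, Complex.exp_add, Complex.exp_log hxne,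
          Complex.exp_pi_mul_I]
        ring
      have hev : G0 =ᶠ[nhds q] alt :=
        Filter.eventuallyEq_of_mem (hU.mem_nhds hns) heq
      exact haltdiff.congr_of_eventuallyEq hev
  -- growth bound for G0
  set C : ℝ := c * Real.exp (Real.pi / 2) with hCdef
  have hG0b : ∀ q : ℂ, q ≠ 0 →
      ‖G0 q‖ ≤ C * Real.exp (|Real.log (‖q‖)| / 2) := by
    intro q hq
    have h1 : ‖Complex.log q / (2 * (Real.pi : ℂ) * I)‖ =
        ‖Complex.log q‖ / (2 * Real.pi) := by
      rw [norm_div]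
      congr 1
      simp [abs_of_pos Real.pi_pos]
    have h2 : ‖Complex.log q‖ ≤ |Real.log (‖q‖)| + Real.pi := by
      calc ‖Complex.log q‖ ≤ |(Complex.log q).re| + |(Complex.log q).im| :=
            Complex.norm_le_abs_re_add_abs_im _
        _ ≤ |Real.log (‖q‖)| + Real.pi := by
            rw [Complex.log_re, Complex.log_im]
            exact add_le_add_right (Complex.abs_arg_le_pi q) _
    have h3 : Real.pi * ‖Complex.log q / (2 * (Real.pi : ℂ) * I)‖ ≤
        |Real.log (‖q‖)| / 2 + Real.pi / 2 := by
      rw [h1]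
      rw [← add_div, ← mul_div_assoc]
      rw [div_le_div_iff₀ (by positivity) (by norm_num : (0:ℝ) < 2)]
      have hpos : (0:ℝ) < 2 * Real.pi := by positivity
      calc Real.pi * ‖Complex.log q‖ * 2
          = ‖Complex.log q‖ * (2 * Real.pi) := by ring
        _ ≤ (|Real.log (‖q‖)| + Real.pi) * (2 * Real.pi) :=
            mul_le_mul_of_nonneg_right h2 hpos.le
      -- goal: π * |log q| * 2 ≤ (|log|q|| + π) * (2π)?? check orientation
    calc ‖G0 q‖ ≤ c * Real.exp (Real.pi * ‖Complex.log q / (2 * (Real.pi:ℂ) * I)‖) :=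
          hgb _
      _ ≤ c * Real.exp (|Real.log (‖q‖)| / 2 + Real.pi / 2) :=
          mul_le_mul_of_nonneg_left (Real.exp_le_exp.mpr h3) hc.le
      _ = C * Real.exp (|Real.log (‖q‖)| / 2) := by
          rw [hCdef, Real.exp_add]; ring
  -- extend G0 and its inversion to entire functions
  obtain ⟨G, hGdiff, hGeq⟩ := extend_entire G0 hG0diff C hG0b
  obtain ⟨H, hHdiff, hHeq⟩ := extend_entire (fun q => G0 q⁻¹)
    (fun q hq => (hG0diff _ (inv_ne_zero hq)).comp q (differentiableAt_inv hq))
    C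
    (by
      intro q hq
      have := hG0b q⁻¹ (inv_ne_zero hq)
      rwa [norm_inv, Real.log_inv, abs_neg] at this)
  -- G is bounded
  obtain ⟨M1, hM1⟩ := (isCompact_closedBall (0:ℂ) 1).exists_bound_of_continuousOn
    hGdiff.continuous.continuousOn
  obtain ⟨M2, hM2⟩ := (isCompact_closedBall (0:ℂ) 1).exists_bound_of_continuousOn
    hHdiff.continuous.continuousOn
  have hGbdd : ∀ q : ℂ, ‖G q‖ ≤ max M1 M2 := by
    intro q
    rcases le_or_gt (‖q‖) 1 with h | h
    · exact le_trans (hM1 q (by simpa [Complex.dist_eq] using h)) (le_max_left _ _)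
    · have hq0 : q ≠ 0 := by
        intro h0; rw [h0] at h; simp at h; linarith
      have hqi : q⁻¹ ∈ closedBall (0:ℂ) 1 := by
        simp only [mem_closedBall, Complex.dist_eq, sub_zero] at *
        rw [norm_inv]
        exact inv_le_one_of_one_le₀ h.le
      have : G q = H q⁻¹ := by
        rw [hGeq q hq0, hHeq q⁻¹ (inv_ne_zero hq0)]
        simp [inv_inv]
      rw [this]
      exact le_trans (hM2 _ hqi) (le_max_right _ _)
  have hrange : IsBounded (range G) := by
    rw [isBounded_iff_forall_norm_le]
    exact ⟨max M1 M2, by rintro x ⟨q, rfl⟩; exact hGbdd q⟩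
  -- Liouville
  have hconst := hGdiff.apply_eq_apply_of_bounded hrange
    (Complex.exp (2 * (Real.pi : ℂ) * I * w)) 1
  -- translate back
  have hne : Complex.exp (2 * (Real.pi : ℂ) * I * w) ≠ 0 := Complex.exp_ne_zero _
  have e1 : g w = G0 (Complex.exp (2 * (Real.pi : ℂ) * I * w)) := by
    apply key_congr hper
    rw [hexp0 _ hne]
  have e2 : G0 (1 : ℂ) = g 0 := by
    simp only [hG0def, Complex.log_one, zero_div]
  rw [e1, ← hGeq _ hne, hconst, hGeq 1 one_ne_zero, e2]

/-- If an entire function on ℂⁿ of arbitrarily small exponential type is invariant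
under translation by a nonzero vector `v`, then it is invariant along the whole
complex line in the direction `v`. -/
theorem periodic_upgrades_to_complex_line_invariance
    (n : ℕ) (f : EuclideanSpace ℂ (Fin n) → ℂ) (hf : Differentiable ℂ f)
    (hgrowth : ∀ ε : ℝ, 0 < ε → ∃ c : ℝ, 0 < c ∧
      ∀ z : EuclideanSpace ℂ (Fin n), ‖f z‖ ≤ c * Real.exp (ε * ‖z‖))
    (v : EuclideanSpace ℂ (Fin n)) (hv : v ≠ 0)
    (hper : ∀ z : EuclideanSpace ℂ (Fin n), f (z + v) = f z) :
    ∀ (z : EuclideanSpace ℂ (Fin n)) (w : ℂ), f (z + w • v) = f z := by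
  intro z w
  have hvpos : (0:ℝ) < ‖v‖ := norm_pos_iff.mpr hv
  set g : ℂ → ℂ := fun w => f (z + w • v) with hgdef
  have hgdiff : Differentiable ℂ g := by
    apply hf.comp
    exact (differentiable_const z).add (differentiable_id.smul_const v)
  obtain ⟨c, hc, hcb⟩ := hgrowth (Real.pi / ‖v‖) (by positivity)
  set c' : ℝ := c * Real.exp (Real.pi / ‖v‖ * ‖z‖) with hc'def
  have hc' : 0 < c' := by positivity
  have hgb : ∀ u : ℂ, ‖g u‖ ≤ c' * Real.exp (Real.pi * ‖u‖) := by
    intro u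
    have h1 : ‖z + u • v‖ ≤ ‖z‖ + ‖u‖ * ‖v‖ := by
      calc ‖z + u • v‖ ≤ ‖z‖ + ‖u • v‖ := norm_add_le _ _
        _ = ‖z‖ + ‖u‖ * ‖v‖ := by rw [norm_smul]
    calc ‖g u‖ ≤ c * Real.exp (Real.pi / ‖v‖ * ‖z + u • v‖) := hcb _
      _ ≤ c * Real.exp (Real.pi / ‖v‖ * (‖z‖ + ‖u‖ * ‖v‖)) := by
          apply mul_le_mul_of_nonneg_left _ hc.le
          apply Real.exp_le_exp.mpr
          apply mul_le_mul_of_nonneg_left h1 (by positivity)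
      _ = c' * Real.exp (Real.pi * ‖u‖) := by
          rw [hc'def, mul_assoc, ← Real.exp_add]
          congr 1
          field_simp
  have hgper : ∀ u : ℂ, g (u + 1) = g u := by
    intro u
    simp only [hgdef]
    rw [add_smul, one_smul, ← add_assoc, hper]
  have := periodic_const g hgdiff c' hc' hgb hgper w
  simpa [hgdef] using this
end

section
/- Let H be an additive subgroup of ℂⁿ whose ℂ-linear span is all of ℂⁿ. Let f : ℂⁿ → ℂ be an entire function such that for every ε > 0 there exists a constant c(ε) > 0 with |f(z)| ≤ c(ε)·exp(ε·‖z‖) for all z ∈ ℂⁿ, and suppose f(z + h) = f(z) for all z ∈ ℂⁿ and all h ∈ H. Then f is constant. -/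
open Complex Filter Asymptotics Function Set Metric Topology

/-- Branch-independence: a `1`-periodic function composed with `log · / (2πi)`
    gives the same value for any logarithm of `w`. -/
lemma branch_indep (g : ℂ → ℂ) (hper : ∀ t : ℂ, g (t + 1) = g t)
    {w s : ℂ} (hw : w ≠ 0) (hs : Complex.exp s = w) :
    g (Complex.log w / (2 * Real.pi * Complex.I)) = g (s / (2 * Real.pi * Complex.I)) := by
  have hp : Function.Periodic g 1 := hper
  have hint : ∀ (t : ℂ) (k : ℤ), g (t + k) = g t := by
    intro t k
    simpa using (hp.int_mul k) t
  have h2 : (2 * (Real.pi : ℂ) * Complex.I) ≠ 0 := by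
    simp [Real.pi_ne_zero, Complex.I_ne_zero]
  have hex : Complex.exp (Complex.log w) = Complex.exp s := by
    rw [Complex.exp_log hw, hs]
  obtain ⟨k, hk⟩ := Complex.exp_eq_exp_iff_exists_int.1 hex
  rw [hk]
  have : (s + k * (2 * Real.pi * Complex.I)) / (2 * Real.pi * Complex.I)
      = s / (2 * Real.pi * Complex.I) + k := by
    field_simp
  rw [this, hint]

/-- Key one-dimensional lemma: an entire `1`-periodic function of exponential
    type `π < 2π` is constant. -/
lemma periodic_small_type_const (g : ℂ → ℂ) (hg : Differentiable ℂ g)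
    (hper : ∀ t : ℂ, g (t + 1) = g t)
    {C : ℝ} (hC : 0 < C)
    (hgr : ∀ t : ℂ, ‖g t‖ ≤ C * Real.exp (Real.pi * ‖t‖)) :
    ∀ t : ℂ, g t = g 0 := by
  set ψ : ℂ → ℂ := fun w => g (Complex.log w / (2 * Real.pi * Complex.I)) with hψ
  -- differentiability of ψ away from 0
  have hψdiff : ∀ w : ℂ, w ≠ 0 → DifferentiableAt ℂ ψ w := by
    intro w hw
    by_cases hws : w ∈ Complex.slitPlane
    · exact DifferentiableAt.comp w (hg _) ((Complex.differentiableAt_log hws).div_const _)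
    · have hw2 : -w ∈ Complex.slitPlane := by
        rw [Complex.mem_slitPlane_iff] at hws ⊢
        push_neg at hws
        obtain ⟨h1, h2⟩ := hws
        have hre : w.re ≠ 0 := by
          intro h0
          exact hw (Complex.ext h0 h2)
        left
        simp only [Complex.neg_re]
        cases lt_or_eq_of_le h1 with
        | inl h => linarith
        | inr h => exact absurd h hre
      set ψ₂ : ℂ → ℂ := fun v =>
        g ((Complex.log (-v) + Real.pi * Complex.I) / (2 * Real.pi * Complex.I)) with hψ₂
      have hψ₂d : DifferentiableAt ℂ ψ₂ w := by
        apply DifferentiableAt.comp w (hg _)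
        apply DifferentiableAt.div_const
        apply DifferentiableAt.add_const
        exact DifferentiableAt.comp w (Complex.differentiableAt_log hw2)
          differentiable_neg.differentiableAt
      have heq : ∀ v : ℂ, v ≠ 0 → ψ v = ψ₂ v := by
        intro v hv
        exact branch_indep g hper hv
          (by rw [Complex.exp_add, Complex.exp_log (neg_ne_zero.2 hv), Complex.exp_pi_mul_I]
              ring)
      have hev : ψ =ᶠ[𝓝 w] ψ₂ := by
        filter_upwards [isOpen_compl_singleton.mem_nhds
          (by simpa using hw : w ∈ ({0}ᶜ : Set ℂ))] with v hv
        exact heq v hv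
      exact hψ₂d.congr_of_eventuallyEq hev
  -- bound on ψ
  set C₁ : ℝ := C * Real.exp (Real.pi / 2) with hC₁
  have hC₁pos : 0 < C₁ := mul_pos hC (Real.exp_pos _)
  have hbound : ∀ w : ℂ, w ≠ 0 →
      ‖ψ w‖ ≤ C₁ * ((‖w‖) ^ ((1:ℝ)/2) + (‖w‖) ^ (-((1:ℝ)/2))) := by
    intro w hw
    have hr : 0 < ‖w‖ := norm_pos_iff.mpr hw
    have hlog : ‖Complex.log w‖ ≤ |Real.log (‖w‖)| + Real.pi := by
      calc ‖Complex.log w‖ ≤ |(Complex.log w).re| + |(Complex.log w).im| :=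
            Complex.norm_le_abs_re_add_abs_im _
        _ = |Real.log (‖w‖)| + |Complex.arg w| := by
            rw [Complex.log_re, Complex.log_im]
        _ ≤ |Real.log (‖w‖)| + Real.pi :=
            add_le_add_right (Complex.abs_arg_le_pi w) _
    have habs2 : ‖Complex.log w / (2 * Real.pi * Complex.I)‖
        = ‖Complex.log w‖ / (2 * Real.pi) := by
      rw [norm_div]
      congr 1
      simp [Complex.norm_real, abs_of_pos Real.pi_pos]
    have hexp : Real.exp (|Real.log (‖w‖)| / 2)
        ≤ (‖w‖) ^ ((1:ℝ)/2) + (‖w‖) ^ (-((1:ℝ)/2)) := by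
      have e1 : (‖w‖) ^ ((1:ℝ)/2) = Real.exp (Real.log (‖w‖) / 2) := by
        rw [Real.rpow_def_of_pos hr, mul_one_div]
      have e2 : (‖w‖) ^ (-((1:ℝ)/2)) = Real.exp (-(Real.log (‖w‖)) / 2) := by
        rw [Real.rpow_def_of_pos hr]
        ring_nf
      rcases abs_choice (Real.log (‖w‖)) with hc | hc <;> rw [hc]
      · rw [← e1]
        exact le_add_of_nonneg_right (Real.rpow_nonneg hr.le _)
      · rw [← e2]
        exact le_add_of_nonneg_left (Real.rpow_nonneg hr.le _)
    calc ‖ψ w‖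
        ≤ C * Real.exp (Real.pi * ‖Complex.log w / (2 * Real.pi * Complex.I)‖) :=
          hgr _
      _ = C * Real.exp (‖Complex.log w‖ / 2) := by
          rw [habs2]
          congr 2
          field_simp
      _ ≤ C * Real.exp ((|Real.log (‖w‖)| + Real.pi) / 2) :=
          mul_le_mul_of_nonneg_left (Real.exp_le_exp.2 (by linarith)) hC.le
      _ = C₁ * Real.exp (|Real.log (‖w‖)| / 2) := by
          rw [hC₁]
          have : (|Real.log (‖w‖)| + Real.pi) / 2
              = Real.pi / 2 + |Real.log (‖w‖)| / 2 := by ring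
          rw [this, Real.exp_add, ← mul_assoc]
      _ ≤ C₁ * ((‖w‖) ^ ((1:ℝ)/2) + (‖w‖) ^ (-((1:ℝ)/2))) :=
          mul_le_mul_of_nonneg_left hexp hC₁pos.le
  -- removable singularity at 0
  have key : ∀ z : ℂ, z ≠ 0 → ‖z‖ ≤ 1 →
      ‖(ψ z - ψ 0) * z‖
        ≤ (2 * C₁ + ‖ψ 0‖) * (‖z‖) ^ ((1:ℝ)/2) := by
    intro z hz h1
    have hr : 0 < ‖z‖ := norm_pos_iff.mpr hz
    have hb := hbound z hz
    have e1 : (‖z‖) ^ (-((1:ℝ)/2)) * ‖z‖ = (‖z‖) ^ ((1:ℝ)/2) := by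
      rw [← Real.rpow_add_one hr.ne' (-((1:ℝ)/2))]
      norm_num
    have e2 : ‖z‖ ≤ (‖z‖) ^ ((1:ℝ)/2) := by
      nth_rewrite 1 [← Real.rpow_one (‖z‖)]
      exact Real.rpow_le_rpow_of_exponent_ge hr h1 (by norm_num)
    have e3 : (‖z‖) ^ ((1:ℝ)/2) * ‖z‖ ≤ (‖z‖) ^ ((1:ℝ)/2) := by
      calc (‖z‖) ^ ((1:ℝ)/2) * ‖z‖
          ≤ (‖z‖) ^ ((1:ℝ)/2) * 1 :=
            mul_le_mul_of_nonneg_left h1 (Real.rpow_nonneg hr.le _)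
        _ = (‖z‖) ^ ((1:ℝ)/2) := mul_one _
    have htri : ‖ψ z - ψ 0‖ ≤ ‖ψ z‖ + ‖ψ 0‖ := by
      simpa using norm_sub_le (ψ z) (ψ 0)
    calc ‖(ψ z - ψ 0) * z‖ = ‖ψ z - ψ 0‖ * ‖z‖ :=
          norm_mul _ _
      _ ≤ (C₁ * ((‖z‖) ^ ((1:ℝ)/2) + (‖z‖) ^ (-((1:ℝ)/2)))
            + ‖ψ 0‖) * ‖z‖ :=
          mul_le_mul_of_nonneg_right (le_trans htri (add_le_add_left hb _)) hr.le
      _ = C₁ * ((‖z‖) ^ ((1:ℝ)/2) * ‖z‖)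
            + C₁ * ((‖z‖) ^ (-((1:ℝ)/2)) * ‖z‖)
            + ‖ψ 0‖ * ‖z‖ := by ring
      _ ≤ C₁ * (‖z‖) ^ ((1:ℝ)/2) + C₁ * (‖z‖) ^ ((1:ℝ)/2)
            + ‖ψ 0‖ * (‖z‖) ^ ((1:ℝ)/2) := by
          rw [e1]
          have t1 := mul_le_mul_of_nonneg_left e3 hC₁pos.le
          have t2 := mul_le_mul_of_nonneg_left e2 (norm_nonneg (ψ 0))
          linarith
      _ = (2 * C₁ + ‖ψ 0‖) * (‖z‖) ^ ((1:ℝ)/2) := by ring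
  have hball : ∀ᶠ z in 𝓝[≠] (0:ℂ), ‖z‖ ≤ 1 := by
    have h1 : ∀ᶠ z in 𝓝 (0:ℂ), ‖z‖ ≤ 1 := by
      filter_upwards [Metric.closedBall_mem_nhds (0:ℂ) one_pos] with z hz
      simpa using mem_closedBall_zero_iff.1 hz
    exact h1.filter_mono nhdsWithin_le_nhds
  have hne : ∀ᶠ z in 𝓝[≠] (0:ℂ), z ≠ 0 := by
    filter_upwards [self_mem_nhdsWithin] with z hz
    exact hz
  have ho : (fun z : ℂ => ψ z - ψ 0) =o[𝓝[≠] (0:ℂ)] fun z => (z - 0)⁻¹ := by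
    rw [isLittleO_iff_tendsto']
    · have htend0 : Tendsto (fun z : ℂ =>
          (2 * C₁ + ‖ψ 0‖) * (‖z‖) ^ ((1:ℝ)/2))
          (𝓝[≠] (0:ℂ)) (𝓝 0) := by
        have habs : Tendsto (fun z : ℂ => ‖z‖) (𝓝[≠] (0:ℂ)) (𝓝 0) := by
          have := continuous_norm.tendsto (0:ℂ)
          simpa using this.mono_left nhdsWithin_le_nhds
        have hrpow : Tendsto (fun z : ℂ => (‖z‖) ^ ((1:ℝ)/2))
            (𝓝[≠] (0:ℂ)) (𝓝 ((0:ℝ) ^ ((1:ℝ)/2))) :=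
          habs.rpow_const (Or.inr (by norm_num))
        rw [Real.zero_rpow (by norm_num : ((1:ℝ)/2) ≠ 0)] at hrpow
        simpa using hrpow.const_mul (2 * C₁ + ‖ψ 0‖)
      apply squeeze_zero_norm' _ htend0
      filter_upwards [hne, hball] with z hz h1
      have := key z hz h1
      simpa [div_eq_mul_inv, inv_inv, sub_zero] using this
    · filter_upwards [hne] with z hz h0
      exfalso
      rw [sub_zero] at h0
      exact hz (inv_eq_zero.1 h0)
  set Φ : ℂ → ℂ := Function.update ψ 0 (limUnder (𝓝[≠] (0:ℂ)) ψ) with hΦdef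
  have hΦ : Differentiable ℂ Φ := by
    have := Complex.differentiableOn_update_limUnder_of_isLittleO
      (f := ψ) (s := (Set.univ : Set ℂ)) (c := 0) univ_mem
      ((fun w hw => (hψdiff w hw.2).differentiableWithinAt)) ho
    rw [← differentiableOn_univ]
    exact this
  have hΦψ : ∀ w : ℂ, w ≠ 0 → Φ w = ψ w := fun w hw => Function.update_of_ne hw _ _
  have hΦbound : ∀ w : ℂ, 1 ≤ ‖w‖ →
      ‖Φ w‖ ≤ (2 * C₁) * (‖w‖) ^ ((1:ℝ)/2) := by
    intro w h1
    have hw : w ≠ 0 := by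
      intro h0
      rw [h0] at h1
      simp only [norm_zero] at h1
      linarith
    rw [hΦψ w hw]
    have hb := hbound w hw
    have h2 : (‖w‖) ^ (-((1:ℝ)/2)) ≤ (‖w‖) ^ ((1:ℝ)/2) :=
      le_trans (Real.rpow_le_one_of_one_le_of_nonpos h1 (by norm_num))
        (Real.one_le_rpow h1 (by norm_num))
    calc ‖ψ w‖
        ≤ C₁ * ((‖w‖) ^ ((1:ℝ)/2) + (‖w‖) ^ (-((1:ℝ)/2))) := hb
      _ ≤ C₁ * ((‖w‖) ^ ((1:ℝ)/2) + (‖w‖) ^ ((1:ℝ)/2)) :=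
          mul_le_mul_of_nonneg_left (add_le_add_right h2 _) hC₁pos.le
      _ = (2 * C₁) * (‖w‖) ^ ((1:ℝ)/2) := by ring
  -- Liouville applied to the difference quotient
  have hΦconst : ∀ w : ℂ, w ≠ 0 → Φ w = Φ 0 := by
    set D : ℂ → ℂ := dslope Φ 0 with hD
    have hDd : Differentiable ℂ D := by
      rw [← differentiableOn_univ]
      exact (Complex.differentiableOn_dslope univ_mem).2 hΦ.differentiableOn
    have hDval : ∀ w : ℂ, w ≠ 0 → D w = (Φ w - Φ 0) / w := by
      intro w hw
      rw [hD, dslope_of_ne _ hw, slope_def_field, sub_zero]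
    set A : ℝ := ‖Φ 0‖ with hA
    have hAnn : (0:ℝ) ≤ A := norm_nonneg _
    have htriΦ : ∀ w : ℂ, ‖Φ w - Φ 0‖ ≤ ‖Φ w‖ + A := by
      intro w
      simpa using norm_sub_le (Φ w) (Φ 0)
    have hout : ∀ w : ℂ, 1 ≤ ‖w‖ → ‖D w‖ ≤ 2 * C₁ + A := by
      intro w h1
      have hw : w ≠ 0 := by
        intro h0
        rw [h0] at h1
        simp only [norm_zero] at h1
        linarith
      have hwpos : (0:ℝ) < ‖w‖ := lt_of_lt_of_le one_pos h1
      rw [hDval w hw, norm_div, div_le_iff₀ hwpos]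
      have h4 : (‖w‖) ^ ((1:ℝ)/2) ≤ ‖w‖ := by
        nth_rewrite 2 [← Real.rpow_one (‖w‖)]
        exact Real.rpow_le_rpow_of_exponent_le h1 (by norm_num)
      calc ‖Φ w - Φ 0‖ ≤ ‖Φ w‖ + A := htriΦ w
        _ ≤ (2 * C₁) * (‖w‖) ^ ((1:ℝ)/2) + A := add_le_add_left (hΦbound w h1) _
        _ ≤ (2 * C₁) * ‖w‖ + A * ‖w‖ :=
            add_le_add (mul_le_mul_of_nonneg_left h4 (by positivity))
              (le_mul_of_one_le_right hAnn h1)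
        _ = (2 * C₁ + A) * ‖w‖ := by ring
    obtain ⟨M₀, hM₀⟩ := (isCompact_closedBall (0:ℂ) 1).exists_bound_of_continuousOn
      hDd.continuous.continuousOn
    have hbdd : Bornology.IsBounded (Set.range D) := by
      rw [isBounded_iff_forall_norm_le]
      refine ⟨max M₀ (2 * C₁ + A), ?_⟩
      rintro x ⟨w, rfl⟩
      by_cases hcase : ‖w‖ ≤ 1
      · refine le_max_of_le_left (hM₀ w ?_)
        rw [mem_closedBall_zero_iff]
        exact hcase
      · exact le_max_of_le_right (hout w (le_of_not_ge hcase))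
    have hconst : ∀ w : ℂ, D w = D 1 := fun w =>
      hDd.apply_eq_apply_of_bounded hbdd w 1
    have hk0 : D 1 = 0 := by
      have hub : ∀ x : ℝ, 1 ≤ x → ‖D 1‖ ≤ (2 * C₁ + A) * x ^ (-((1:ℝ)/2)) := by
        intro x hx
        have hx0 : (0:ℝ) < x := lt_of_lt_of_le one_pos hx
        have h1 : ‖(x:ℂ)‖ = x := by rw [Complex.norm_real, Real.norm_of_nonneg hx0.le]
        have hxx : (1:ℝ) ≤ ‖(x:ℂ)‖ := by rwa [h1]
        have hwne : (x:ℂ) ≠ 0 := by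
          simpa using hx0.ne'
        rw [← hconst x, hDval _ hwne, norm_div, h1, div_le_iff₀ hx0]
        have e1 : x ^ (-((1:ℝ)/2)) * x = x ^ ((1:ℝ)/2) := by
          rw [← Real.rpow_add_one hx0.ne' (-((1:ℝ)/2))]
          norm_num
        have e2 : (1:ℝ) ≤ x ^ ((1:ℝ)/2) := Real.one_le_rpow hx (by norm_num)
        have h3 : ‖Φ x - Φ 0‖ ≤ 2 * C₁ * x ^ ((1:ℝ)/2) + A := by
          have hb2 := hΦbound (x:ℂ) hxx
          rw [h1] at hb2
          exact le_trans (htriΦ _) (add_le_add_left hb2 _)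
        rw [mul_assoc, e1]
        nlinarith [Real.rpow_nonneg hx0.le ((1:ℝ)/2)]
      have htend : Tendsto (fun x : ℝ => (2 * C₁ + A) * x ^ (-((1:ℝ)/2))) atTop (𝓝 0) := by
        have := tendsto_rpow_neg_atTop (by norm_num : (0:ℝ) < 1/2)
        simpa using this.const_mul (2 * C₁ + A)
      have hle : ‖D 1‖ ≤ 0 :=
        ge_of_tendsto htend (eventually_atTop.2 ⟨1, fun x hx => hub x hx⟩)
      simpa using norm_le_zero_iff.1 hle
    intro w hw
    have h0 : (Φ w - Φ 0) / w = 0 := by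
      rw [← hDval w hw, hconst w, hk0]
    have := (div_eq_zero_iff.1 h0).resolve_right hw
    exact sub_eq_zero.1 this
  -- conclude
  intro t
  have h1 : ψ (Complex.exp (2 * Real.pi * Complex.I * t)) = g t := by
    have := branch_indep g hper (Complex.exp_ne_zero _) (rfl :
      Complex.exp (2 * Real.pi * Complex.I * t) = Complex.exp (2 * Real.pi * Complex.I * t))
    rw [hψ]
    simp only at this ⊢
    rw [this]
    congr 1
    have h2 : (2 * (Real.pi : ℂ) * Complex.I) ≠ 0 := by
      simp [Real.pi_ne_zero, Complex.I_ne_zero]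
    field_simp
  have h2 : ψ 1 = g 0 := by
    rw [hψ]
    simp
  calc g t = ψ (Complex.exp (2 * Real.pi * Complex.I * t)) := h1.symm
    _ = Φ (Complex.exp (2 * Real.pi * Complex.I * t)) :=
        (hΦψ _ (Complex.exp_ne_zero _)).symm
    _ = Φ 0 := hΦconst _ (Complex.exp_ne_zero _)
    _ = Φ 1 := (hΦconst 1 one_ne_zero).symm
    _ = ψ 1 := hΦψ 1 one_ne_zero
    _ = g 0 := h2

/-- Liouville-type theorem: an entire function on ℂⁿ of arbitrarily small
exponential type which is invariant under an additive subgroup `H` whose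
ℂ-linear span is all of ℂⁿ is constant. -/
theorem invariant_small_exponential_type_constant
    (n : ℕ) (H : AddSubgroup (EuclideanSpace ℂ (Fin n)))
    (hspan : Submodule.span ℂ (H : Set (EuclideanSpace ℂ (Fin n))) = ⊤)
    (f : EuclideanSpace ℂ (Fin n) → ℂ) (hf : Differentiable ℂ f)
    (hgrowth : ∀ ε : ℝ, 0 < ε → ∃ c : ℝ, 0 < c ∧
      ∀ z : EuclideanSpace ℂ (Fin n), ‖f z‖ ≤ c * Real.exp (ε * ‖z‖))
    (hinv : ∀ z : EuclideanSpace ℂ (Fin n), ∀ h ∈ H, f (z + h) = f z) :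
    ∀ z : EuclideanSpace ℂ (Fin n), f z = f 0 := by
  classical
  -- the set of invariance directions is a ℂ-submodule
  have smul_mem : ∀ (h : EuclideanSpace ℂ (Fin n)), (∀ z : EuclideanSpace ℂ (Fin n), f (z + h) = f z) →
      ∀ (c : ℂ) (z : EuclideanSpace ℂ (Fin n)), f (z + c • h) = f z := by
    intro h hh c z
    set g : ℂ → ℂ := fun t => f (z + t • h) with hgdef
    have haff : Differentiable ℂ (fun t : ℂ => z + t • h) := by
      simpa using (differentiable_id.smul_const h).const_add z
    have hgd : Differentiable ℂ g := hf.comp haff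
    have hgper : ∀ t : ℂ, g (t + 1) = g t := by
      intro t
      simp only [hgdef, add_smul, one_smul, ← add_assoc]
      exact hh _
    -- growth of g with ε = π
    obtain ⟨c₀, hc₀, hc₀b⟩ := hgrowth (Real.pi / (‖h‖ + 1))
      (div_pos Real.pi_pos (by positivity))
    set C : ℝ := c₀ * Real.exp (Real.pi / (‖h‖ + 1) * ‖z‖) with hCdef
    have hCpos : 0 < C := mul_pos hc₀ (Real.exp_pos _)
    have hgrb : ∀ t : ℂ, ‖g t‖ ≤ C * Real.exp (Real.pi * ‖t‖) := by
      intro t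
      have hεh : Real.pi / (‖h‖ + 1) * ‖h‖ ≤ Real.pi := by
        rw [div_mul_eq_mul_div, div_le_iff₀ (by positivity : (0:ℝ) < ‖h‖ + 1)]
        nlinarith [Real.pi_pos, norm_nonneg h]
      have h2 : ‖z + t • h‖ ≤ ‖z‖ + ‖t‖ * ‖h‖ := by
        calc ‖z + t • h‖ ≤ ‖z‖ + ‖t • h‖ := norm_add_le _ _
          _ = ‖z‖ + ‖t‖ * ‖h‖ := by rw [norm_smul]
      have hε : 0 < Real.pi / (‖h‖ + 1) := div_pos Real.pi_pos (by positivity)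
      have h3 : Real.pi / (‖h‖ + 1) * ‖z + t • h‖
          ≤ Real.pi / (‖h‖ + 1) * ‖z‖ + Real.pi * ‖t‖ := by
        nlinarith [mul_le_mul_of_nonneg_left h2 hε.le,
          mul_le_mul_of_nonneg_left hεh (norm_nonneg t)]
      calc ‖g t‖
          ≤ c₀ * Real.exp (Real.pi / (‖h‖ + 1) * ‖z + t • h‖) := hc₀b _
        _ ≤ c₀ * Real.exp (Real.pi / (‖h‖ + 1) * ‖z‖ + Real.pi * ‖t‖) :=
            mul_le_mul_of_nonneg_left (Real.exp_le_exp.2 h3) hc₀.le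
        _ = C * Real.exp (Real.pi * ‖t‖) := by
            rw [hCdef, Real.exp_add, mul_assoc]
    have := periodic_small_type_const g hgd hgper hCpos hgrb c
    simpa [hgdef] using this
  set S : Submodule ℂ (EuclideanSpace ℂ (Fin n)) :=
    { carrier := {h : EuclideanSpace ℂ (Fin n) | ∀ z : EuclideanSpace ℂ (Fin n), f (z + h) = f z}
      add_mem' := by
        intro a b ha hb z
        rw [← add_assoc, hb, ha]
      zero_mem' := by intro z; rw [add_zero]
      smul_mem' := by
        intro c h hh z
        exact smul_mem h hh c z } with hS
  have hHS : (H : Set (EuclideanSpace ℂ (Fin n))) ⊆ S := by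
    intro h hh z
    exact hinv z h hh
  have htop : S = ⊤ := top_unique (hspan ▸ Submodule.span_le.2 hHS)
  intro z
  have hz : z ∈ S := htop ▸ Submodule.mem_top
  have hz' : ∀ w : EuclideanSpace ℂ (Fin n), f (w + z) = f w := hz
  have := hz' 0
  simpa using this
end

section
/- Let H be an additive subgroup of ℂⁿ whose ℂ-linear span is all of ℂⁿ. Then there exists a constant σ > 0 (depending only on H) such that every entire function f : ℂⁿ → ℂ satisfying: (i) f(z + h) = f(z) for all z ∈ ℂⁿ and all h ∈ H, and (ii) |f(z)| ≤ c·exp(σ'·‖z‖) for all z ∈ ℂⁿ for some constants c > 0 and 0 < σ' < σ, is constant. -/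
open Complex MeasureTheory intervalIntegral Set Filter

/-- Horizontal contour shift for a 1-periodic entire function. -/
lemma horiz_shift (h : ℂ → ℂ) (hd : Differentiable ℂ h)
    (hp : ∀ w : ℂ, h (w + 1) = h w) (y : ℝ) :
    ∫ x : ℝ in (0:ℝ)..1, h (x + y * Complex.I) = ∫ x : ℝ in (0:ℝ)..1, h x := by
  have H := Complex.integral_boundary_rect_eq_zero_of_differentiableOn h 0 (1 + y * Complex.I)
    (hd.differentiableOn)
  have hre0 : (0:ℂ).re = 0 := rfl
  have him0 : (0:ℂ).im = 0 := rfl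
  have hrew : (1 + (y:ℂ) * Complex.I).re = 1 := by simp
  have himw : (1 + (y:ℂ) * Complex.I).im = y := by simp
  rw [hre0, him0, hrew, himw] at H
  have hvert : (∫ t : ℝ in (0:ℝ)..y, h ((1:ℝ) + t * Complex.I))
      = ∫ t : ℝ in (0:ℝ)..y, h ((0:ℝ) + t * Complex.I) := by
    refine intervalIntegral.integral_congr fun t _ => ?_
    have : ((1:ℝ) : ℂ) + t * Complex.I = ((0:ℝ) + t * Complex.I) + 1 := by push_cast; ring
    rw [this, hp]
  rw [hvert] at H
  have h0 : ∀ x : ℝ, h (x + (0:ℝ) * Complex.I) = h x := by intro x; norm_num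
  have h1 : (∫ x : ℝ in (0:ℝ)..1, h (x + (0:ℝ) * Complex.I)) = ∫ x : ℝ in (0:ℝ)..1, h x :=
    intervalIntegral.integral_congr fun x _ => h0 x
  rw [h1] at H
  linear_combination -H

lemma fourier_vanish
    (g : ℂ → ℂ) (hg : Differentiable ℂ g) (hper : ∀ t : ℂ, g (t + 1) = g t)
    (C a : ℝ) (ha0 : 0 ≤ a) (ha : a < 2 * Real.pi)
    (hbd : ∀ t : ℂ, ‖g t‖ ≤ C * Real.exp (a * ‖t‖)) (n : ℤ) (hn : n ≠ 0) :
    (∫ x : ℝ in (0:ℝ)..1, Complex.exp (2 * Real.pi * Complex.I * (-n) * x) * g x) = 0 := by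
  set h : ℂ → ℂ := fun w => Complex.exp (2 * Real.pi * Complex.I * (-n) * w) * g w with hh
  have hd : Differentiable ℂ h := ((differentiable_const _).mul differentiable_id).cexp.mul hg
  have hp : ∀ w : ℂ, h (w + 1) = h w := by
    intro w
    simp only [hh]
    rw [hper, mul_add, mul_one, Complex.exp_add]
    have : Complex.exp (2 * (Real.pi:ℂ) * Complex.I * (-n)) = 1 := by
      have harg : 2 * (Real.pi:ℂ) * Complex.I * (-n) = ((-n : ℤ) : ℂ) * (2 * Real.pi * Complex.I) := by
        push_cast; ring
      rw [harg, Complex.exp_int_mul_two_pi_mul_I]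
    rw [this, mul_one]
  -- norm bound on horizontal segment at height y
  have key : ∀ y : ℝ, ‖∫ x : ℝ in (0:ℝ)..1, h x‖
      ≤ C * Real.exp (a * (1 + |y|) + 2 * Real.pi * n * y) := by
    intro y
    rw [← horiz_shift h hd hp y]
    have hb : ∀ x ∈ Set.uIoc (0:ℝ) 1,
        ‖h (x + y * Complex.I)‖ ≤ C * Real.exp (a * (1 + |y|) + 2 * Real.pi * n * y) := by
      intro x hx
      rw [Set.uIoc_of_le zero_le_one] at hx
      have hx0 : 0 < x := hx.1
      have hx1 : x ≤ 1 := hx.2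
      have hrepr : (2 * (Real.pi:ℂ) * Complex.I * (-n) * (x + y * Complex.I))
          = Complex.ofReal (2 * Real.pi * n * y) + Complex.ofReal (-(2 * Real.pi * n * x)) * Complex.I := by
        push_cast
        linear_combination (-2*(Real.pi:ℂ)*n*y) * Complex.I_sq
      have hnorm1 : ‖Complex.exp (2 * (Real.pi:ℂ) * Complex.I * (-n) * (x + y * Complex.I))‖
          = Real.exp (2 * Real.pi * n * y) := by
        rw [hrepr, Complex.norm_exp]
        simp
      have hnormz : ‖(x : ℂ) + y * Complex.I‖ ≤ 1 + |y| := by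
        calc ‖(x : ℂ) + y * Complex.I‖ ≤ ‖(x:ℂ)‖ + ‖(y:ℂ) * Complex.I‖ := norm_add_le _ _
        _ = |x| + |y| := by simp
        _ ≤ 1 + |y| := by
            have : |x| ≤ 1 := abs_le.2 ⟨by linarith, hx1⟩
            linarith
      have hgb : ‖g ((x:ℂ) + y * Complex.I)‖ ≤ C * Real.exp (a * (1 + |y|)) := by
        refine (hbd _).trans ?_
        have hC : 0 ≤ C := le_trans (norm_nonneg _) ((hbd 0).trans_eq (by simp))
        exact mul_le_mul_of_nonneg_left
          (Real.exp_le_exp.2 (mul_le_mul_of_nonneg_left hnormz ha0)) hC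
      calc ‖h ((x:ℂ) + y * Complex.I)‖
          = Real.exp (2 * Real.pi * n * y) * ‖g ((x:ℂ) + y * Complex.I)‖ := by
            rw [hh]; simp only [norm_mul]; rw [hnorm1]
        _ ≤ Real.exp (2 * Real.pi * n * y) * (C * Real.exp (a * (1 + |y|))) :=
            mul_le_mul_of_nonneg_left hgb (Real.exp_nonneg _)
        _ = C * Real.exp (a * (1 + |y|) + 2 * Real.pi * n * y) := by
            rw [Real.exp_add]; ring
    have := intervalIntegral.norm_integral_le_of_norm_le_const hb
    simpa using this
  -- choose y = -n * m and let m → ∞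
  have hdecay : Tendsto (fun m : ℕ =>
      (C * Real.exp a) * Real.exp (a - 2 * Real.pi) ^ m) atTop (nhds 0) := by
    have hr : |Real.exp (a - 2 * Real.pi)| < 1 := by
      rw [abs_of_pos (Real.exp_pos _)]
      exact Real.exp_lt_one_iff.2 (by linarith)
    simpa using (tendsto_pow_atTop_nhds_zero_of_abs_lt_one hr).const_mul (C * Real.exp a)
  have hle : ∀ m : ℕ, ‖∫ x : ℝ in (0:ℝ)..1, h x‖
      ≤ (C * Real.exp a) * Real.exp (a - 2 * Real.pi) ^ m := by
    intro m
    refine (key (-(n:ℝ) * m)).trans ?_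
    have hCnn : (0:ℝ) ≤ C := le_trans (norm_nonneg (g 0)) ((hbd 0).trans_eq (by simp))
    rw [← Real.exp_nat_mul, show C * Real.exp a * Real.exp ((m:ℝ) * (a - 2 * Real.pi))
      = C * (Real.exp a * Real.exp ((m:ℝ) * (a - 2 * Real.pi))) from mul_assoc _ _ _]
    refine mul_le_mul_of_nonneg_left ?_ hCnn
    rw [← Real.exp_add]
    refine Real.exp_le_exp.2 ?_
    have hk : (1:ℝ) ≤ |(n:ℝ)| := by
      have : (1:ℤ) ≤ |n| := Int.one_le_abs hn
      calc (1:ℝ) ≤ (|n| : ℤ) := by exact_mod_cast this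
      _ = |(n:ℝ)| := by push_cast; ring
    have habs : |(-(n:ℝ) * m)| = |(n:ℝ)| * m := by
      rw [abs_mul, abs_neg, Nat.abs_cast]
    rw [habs]
    have h1 : 2 * Real.pi * (n:ℝ) * (-(n:ℝ) * m) = -(2 * Real.pi * (|(n:ℝ)| * |(n:ℝ)|) * m) := by
      rw [abs_mul_abs_self]; ring
    rw [h1]
    have hpi := Real.pi_pos
    have hm : (0:ℝ) ≤ m := Nat.cast_nonneg m
    have h2 : (0:ℝ) ≤ 2 * Real.pi * (|(n:ℝ)| + 1) - a := by nlinarith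
    nlinarith [mul_nonneg (mul_nonneg hm (sub_nonneg.2 hk)) h2]
  have h0 : ‖∫ x : ℝ in (0:ℝ)..1, h x‖ ≤ 0 := ge_of_tendsto' hdecay hle
  simpa [hh] using norm_le_zero_iff.1 h0

lemma periodic_entire_const
    (g : ℂ → ℂ) (hg : Differentiable ℂ g) (hper : ∀ t : ℂ, g (t + 1) = g t)
    (C a : ℝ) (ha0 : 0 ≤ a) (ha : a < 2 * Real.pi)
    (hbd : ∀ t : ℂ, ‖g t‖ ≤ C * Real.exp (a * ‖t‖)) :
    ∀ t : ℂ, g t = g 0 := by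
  haveI : Fact ((0:ℝ) < 1) := ⟨one_pos⟩
  set gr : ℝ → ℂ := fun x => g x with hgr
  have hcont : Continuous gr := hg.continuous.comp Complex.continuous_ofReal
  have hg01 : gr 0 = gr 1 := by
    have := hper 0
    simpa [hgr] using this.symm
  -- the induced continuous map on the circle
  set u : C(AddCircle (1:ℝ), ℂ) :=
    ⟨AddCircle.liftIco 1 0 gr, AddCircle.liftIco_zero_continuous hg01 hcont.continuousOn⟩ with hu
  have hu_coe : ∀ x : ℝ, x ∈ Set.Ico (0:ℝ) 1 → u ↑x = gr x := by
    intro x hx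
    show AddCircle.liftIco 1 0 gr ↑x = gr x
    exact AddCircle.liftIco_zero_coe_apply hx
  have hu_coe' : ∀ x : ℝ, x ∈ Set.Icc (0:ℝ) 1 → u ↑x = gr x := by
    intro x hx
    rcases eq_or_lt_of_le hx.2 with h1 | h1
    · subst h1
      have : ((1:ℝ) : AddCircle (1:ℝ)) = ((0:ℝ) : AddCircle (1:ℝ)) := by
        simpa using (AddCircle.coe_period (p := (1:ℝ)))
      rw [this, hu_coe 0 (by constructor <;> norm_num)]
      exact hg01
    · exact hu_coe x ⟨hx.1, h1⟩
  -- Fourier coefficients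
  have hcoeff : ∀ n : ℤ, fourierCoeff (⇑u) n
      = ∫ x : ℝ in (0:ℝ)..1, Complex.exp (2 * Real.pi * Complex.I * (-n) * x) * g x := by
    intro n
    have heq : Set.EqOn (fun x : ℝ => fourier (-n) (↑x : AddCircle (1:ℝ)) • u ↑x)
        (fun x : ℝ => Complex.exp (2 * Real.pi * Complex.I * (-n) * x) * g x)
        (Set.uIcc (0:ℝ) (0 + 1)) := by
      intro x hx
      rw [Set.uIcc_of_le (by norm_num), zero_add] at hx
      simp only
      rw [fourier_coe_apply, hu_coe' x hx, smul_eq_mul, hgr]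
      push_cast
      ring_nf
    rw [fourierCoeff_eq_intervalIntegral (⇑u) n 0, intervalIntegral.integral_congr heq]
    norm_num
  have hvanish : ∀ n : ℤ, n ≠ 0 → fourierCoeff (⇑u) n = 0 := by
    intro n hn
    rw [hcoeff n]
    exact fourier_vanish g hg hper C a ha0 ha hbd n hn
  have hsum : Summable (fourierCoeff (⇑u)) :=
    summable_of_ne_finset_zero (s := {(0:ℤ)}) fun n hn =>
      hvanish n (by simpa using hn)
  -- g is constant on [0,1)
  have hconst_real : ∀ x : ℝ, x ∈ Set.Ico (0:ℝ) 1 → g x = fourierCoeff (⇑u) 0 := by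
    intro x hx
    have hs := has_pointwise_sum_fourier_series_of_summable hsum (↑x : AddCircle (1:ℝ))
    have := hs.tsum_eq
    rw [tsum_eq_single 0 (fun i hi => by rw [hvanish i hi, zero_smul])] at this
    rw [fourier_zero, smul_eq_mul, mul_one] at this
    exact (this.trans (hu_coe x hx)).symm
  -- identity theorem
  have heq : g = fun _ => fourierCoeff (⇑u) 0 := by
    have hA : AnalyticOnNhd ℂ g Set.univ := analyticOnNhd_univ_iff_differentiable.2 hg
    have hB : AnalyticOnNhd ℂ (fun _ : ℂ => fourierCoeff (⇑u) 0) Set.univ :=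
      analyticOnNhd_const
    refine hA.eq_of_frequently_eq hB (z₀ := ((1:ℝ)/2 : ℝ)) ?_
    have htend : Filter.Tendsto (fun m : ℕ => (((1/2 + (1/4) * (1/(m+1)) : ℝ)) : ℂ))
        Filter.atTop (nhdsWithin (((1:ℝ)/2 : ℝ) : ℂ) {z | z ≠ (((1:ℝ)/2 : ℝ) : ℂ)}) := by
      apply tendsto_nhdsWithin_of_tendsto_nhds_of_eventually_within
      · have h0 : Filter.Tendsto (fun m : ℕ => (1/2 + (1/4) * (1/(m+1)) : ℝ))
            Filter.atTop (nhds (1/2 : ℝ)) := by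
          have : Filter.Tendsto (fun n : ℕ => 1 / ((n : ℝ) + 1)) Filter.atTop (nhds 0) :=
            tendsto_one_div_add_atTop_nhds_zero_nat
          have h := (this.const_mul (1/4 : ℝ)).const_add (1/2 : ℝ)
          simpa using h
        exact (Complex.continuous_ofReal.tendsto _).comp h0
      · filter_upwards with m
        simp only [Set.mem_setOf_eq, ne_eq]
        intro hcontra
        have : (1/2 + (1/4) * (1/((m:ℝ)+1)) : ℝ) = ((1:ℝ)/2) := by
          exact_mod_cast Complex.ofReal_injective hcontra
        have hm : (0:ℝ) < 1/((m:ℝ)+1) := by positivity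
        nlinarith
    refine htend.frequently (Filter.Eventually.frequently ?_)
    filter_upwards with m
    have hm1 : (0:ℝ) < 1/((m:ℝ)+1) := by positivity
    have hm2 : 1/((m:ℝ)+1) ≤ 1 := by
      rw [div_le_one (by positivity)]; linarith [Nat.cast_nonneg (α := ℝ) m]
    exact hconst_real _ ⟨by linarith, by linarith⟩
  intro t
  rw [heq]

/-- Liouville-type theorem with a positive threshold of exponential type:
for an additive subgroup `H` of ℂⁿ whose ℂ-linear span is all of ℂⁿ, there is
`σ > 0` such that every `H`-invariant entire function of exponential type
strictly less than `σ` is constant. -/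
theorem invariant_below_threshold_exponential_type_constant
    (n : ℕ) (H : AddSubgroup (EuclideanSpace ℂ (Fin n)))
    (hspan : Submodule.span ℂ (H : Set (EuclideanSpace ℂ (Fin n))) = ⊤) :
    ∃ σ : ℝ, 0 < σ ∧
      ∀ f : EuclideanSpace ℂ (Fin n) → ℂ, Differentiable ℂ f →
      (∀ z : EuclideanSpace ℂ (Fin n), ∀ h ∈ H, f (z + h) = f z) →
      ∀ c σ' : ℝ, 0 < c → 0 < σ' → σ' < σ →
      (∀ z : EuclideanSpace ℂ (Fin n), ‖f z‖ ≤ c * Real.exp (σ' * ‖z‖)) →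
      ∀ z : EuclideanSpace ℂ (Fin n), f z = f 0 := by
  classical
  set E := EuclideanSpace ℂ (Fin n)
  obtain ⟨s, hsH, hspan', hsli⟩ := exists_linearIndependent ℂ (H : Set E)
  have hsfin : s.Finite := hsli.setFinite
  obtain ⟨R, hR⟩ : ∃ R : ℝ, ∀ v ∈ s, ‖v‖ ≤ R := by
    obtain ⟨R, hR⟩ := (hsfin.image norm).bddAbove
    exact ⟨R, fun v hv => hR (Set.mem_image_of_mem _ hv)⟩
  set M : ℝ := max R 0 with hM
  have hM0 : 0 ≤ M := le_max_right _ _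
  refine ⟨Real.pi / (1 + M), by positivity, ?_⟩
  intro f hf hinv c σ' hc hσ'0 hσ' hbd
  -- key: invariance along each complex line through an element of s
  have hline : ∀ v ∈ s, ∀ (w : E) (t : ℂ), f (w + t • v) = f w := by
    intro v hv w t
    set g : ℂ → ℂ := fun t => f (w + t • v) with hg
    have hgd : Differentiable ℂ g :=
      hf.comp ((differentiable_id.smul_const v).const_add w)
    have hgper : ∀ t : ℂ, g (t + 1) = g t := by
      intro t
      simp only [hg]
      rw [add_smul, one_smul, ← add_assoc]
      exact hinv (w + t • v) v (hsH hv)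
    have hgbd : ∀ t : ℂ, ‖g t‖ ≤ (c * Real.exp (σ' * ‖w‖)) * Real.exp ((σ' * ‖v‖) * ‖t‖) := by
      intro t
      have h1 : ‖g t‖ ≤ c * Real.exp (σ' * ‖w + t • v‖) := by
        rw [hg]; exact hbd (w + t • v)
      refine h1.trans ?_
      rw [mul_assoc, ← Real.exp_add]
      refine mul_le_mul_of_nonneg_left (Real.exp_le_exp.2 ?_) hc.le
      have h2 : ‖w + t • v‖ ≤ ‖w‖ + ‖t‖ * ‖v‖ := by
        refine (norm_add_le _ _).trans ?_
        rw [norm_smul]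
      have := mul_le_mul_of_nonneg_left h2 hσ'0.le
      nlinarith [norm_nonneg t, norm_nonneg v, mul_nonneg (norm_nonneg t) (norm_nonneg v)]
    have haux : (σ' * ‖v‖) < 2 * Real.pi := by
      have hv1 : ‖v‖ ≤ M := le_trans (hR v hv) (le_max_left _ _)
      have h1 : σ' * ‖v‖ ≤ σ' * M := mul_le_mul_of_nonneg_left hv1 hσ'0.le
      have h2 : σ' * M ≤ (Real.pi / (1 + M)) * M :=
        mul_le_mul_of_nonneg_right hσ'.le hM0
      have h3 : (Real.pi / (1 + M)) * M < Real.pi := by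
        rw [div_mul_eq_mul_div, div_lt_iff₀ (by positivity)]
        nlinarith [Real.pi_pos]
      nlinarith [Real.pi_pos]
    have := periodic_entire_const g hgd hgper (c * Real.exp (σ' * ‖w‖)) (σ' * ‖v‖)
      (mul_nonneg hσ'0.le (norm_nonneg v)) haux hgbd t
    simpa [hg] using this
  -- propagate over the span
  have hP : ∀ z ∈ Submodule.span ℂ s, ∀ (t : ℂ) (w : E), f (w + t • z) = f w := by
    intro z hz
    induction hz using Submodule.span_induction with
    | mem v hv => exact fun t w => hline v hv w t
    | zero => intro t w; rw [smul_zero, add_zero]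
    | add z₁ z₂ _ _ h₁ h₂ =>
        intro t w
        rw [smul_add, ← add_assoc, h₂ t _, h₁ t w]
    | smul c z _ hz =>
        intro t w
        rw [smul_smul]
        exact hz (t * c) w
  intro z
  have hz : z ∈ Submodule.span ℂ s := by rw [hspan', hspan]; trivial
  have := hP z hz 1 0
  rwa [one_smul, zero_add] at this
end

section
/- Let f : ℂⁿ → ℂ be an entire function and let σ > 0, p > 0. Suppose ∫_{ℂⁿ} |f(z)|²·exp(−2σ·√(p + ‖z‖²)) dV(z) < ∞. Then for every σ'' > σ there exists a constant C > 0 such that |f(z)| ≤ C·exp(σ''·‖z‖) for all z ∈ ℂⁿ. -/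
open MeasureTheory

section Aux
open Metric Real Complex

private lemma circle_mean_le' (g : ℂ → ℂ) (hg : Differentiable ℂ g) :
    ‖g 0‖ * (2 * π) ≤ ∫ θ in (0:ℝ)..(2*π), ‖g (circleMap 0 1 θ)‖ := by
  have h := (hg.differentiableOn (s := closedBall 0 1)).circleIntegral_sub_inv_smul
      (w := 0) (mem_ball_self one_pos)
  rw [circleIntegral] at h
  simp only [deriv_circleMap, smul_eq_mul, sub_zero] at h
  have hne : ∀ θ : ℝ, circleMap 0 1 θ ≠ 0 := fun θ => circleMap_ne_center one_ne_zero
  have h2 : ∀ θ : ℝ, circleMap 0 1 θ * I * ((circleMap 0 1 θ)⁻¹ * g (circleMap 0 1 θ))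
      = I * g (circleMap 0 1 θ) := by
    intro θ; field_simp [hne θ]
  simp only [h2] at h
  rw [intervalIntegral.integral_const_mul] at h
  have hI : (∫ θ in (0:ℝ)..(2*π), g (circleMap 0 1 θ)) = 2 * (π:ℂ) * g 0 := by
    apply mul_left_cancel₀ Complex.I_ne_zero
    rw [h]; ring
  have hb : ‖2 * (π:ℂ) * g 0‖
      ≤ ∫ θ in (0:ℝ)..(2*π), ‖g (circleMap 0 1 θ)‖ := by
    rw [← hI]
    simpa using
      intervalIntegral.norm_integral_le_integral_norm (f := fun θ => g (circleMap 0 1 θ))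
        (a := 0) (b := 2*π) (by positivity)
  calc ‖g 0‖ * (2 * π) = ‖2 * (π:ℂ) * g 0‖ := by
        rw [norm_mul, norm_mul, Complex.norm_two, Complex.norm_real, Real.norm_eq_abs, abs_of_pos Real.pi_pos]
        ring
    _ ≤ _ := hb

private lemma rot_mp' (n : ℕ) (c : Circle) :
    MeasurePreserving (fun z : Fin n → ℂ => (c : ℂ) • z) volume volume := by
  have h1 : MeasurePreserving (fun z : ℂ => (c : ℂ) * z) volume volume :=
    (rotation c).measurePreserving
  have hm : Measurable (fun z : Fin n → ℂ => (c : ℂ) • z) :=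
    (continuous_const_smul _).measurable
  refine ⟨hm, ?_⟩
  rw [volume_pi]
  symm
  apply Measure.pi_eq (μ := fun _ : Fin n => (volume : Measure ℂ))
  intro s hs
  rw [Measure.map_apply hm (MeasurableSet.univ_pi hs)]
  have hpre : (fun z : Fin n → ℂ => (c : ℂ) • z) ⁻¹' Set.pi Set.univ s
      = Set.pi Set.univ (fun i => (fun z : ℂ => (c:ℂ) * z) ⁻¹' s i) := by
    ext z; simp [Set.mem_pi, Pi.smul_apply, smul_eq_mul]
  rw [hpre, Measure.pi_pi]
  congr 1
  ext i
  rw [← h1.measure_preimage (hs i).nullMeasurableSet]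

private lemma sqrt_lip' (p a d : ℝ) (hp : 0 ≤ p) (ha : 0 ≤ a) (hd : 0 ≤ d) :
    Real.sqrt (p + (a + d) ^ 2) ≤ Real.sqrt (p + a ^ 2) + d := by
  have h1 : a ≤ Real.sqrt (p + a ^ 2) := by
    have := Real.sqrt_le_sqrt (show a^2 ≤ p + a^2 by linarith)
    rwa [Real.sqrt_sq ha] at this
  have h0 : 0 ≤ Real.sqrt (p + a ^ 2) := Real.sqrt_nonneg _
  calc Real.sqrt (p + (a + d) ^ 2) ≤ Real.sqrt ((Real.sqrt (p + a ^ 2) + d) ^ 2) := by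
        apply Real.sqrt_le_sqrt
        have h2 : Real.sqrt (p + a ^ 2) ^ 2 = p + a ^ 2 := Real.sq_sqrt (by positivity)
        nlinarith
    _ = Real.sqrt (p + a ^ 2) + d := Real.sqrt_sq (by linarith)

private lemma sqrt_add_le' (a b : ℝ) (ha : 0 ≤ a) (hb : 0 ≤ b) :
    Real.sqrt (a + b) ≤ Real.sqrt a + Real.sqrt b := by
  have h2 : (Real.sqrt a + Real.sqrt b)^2 = a + 2 * Real.sqrt a * Real.sqrt b + b := by
    have := Real.sq_sqrt ha; have := Real.sq_sqrt hb; nlinarith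
  calc Real.sqrt (a + b) ≤ Real.sqrt ((Real.sqrt a + Real.sqrt b)^2) := by
        apply Real.sqrt_le_sqrt
        have := Real.sqrt_nonneg a; have := Real.sqrt_nonneg b
        nlinarith
    _ = _ := Real.sqrt_sq (by positivity)

private lemma sq_triangle' (n : ℕ) (z w : Fin n → ℂ) :
    Real.sqrt (∑ i, ‖(z + w) i‖^2)
      ≤ Real.sqrt (∑ i, ‖z i‖^2) + Real.sqrt (∑ i, ‖w i‖^2) := by
  let e : (Fin n → ℂ) → EuclideanSpace ℂ (Fin n) := (WithLp.equiv 2 (Fin n → ℂ)).symm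
  have hn : ∀ v : Fin n → ℂ, ‖e v‖ = Real.sqrt (∑ i, ‖v i‖^2) := by
    intro v
    rw [EuclideanSpace.norm_eq]
    congr 1
  have hadd : e (z + w) = e z + e w := rfl
  rw [← hn, ← hn, ← hn, hadd]
  exact norm_add_le _ _

private lemma submean' (n : ℕ) (f : (Fin n → ℂ) → ℂ) (hf : Differentiable ℂ f) (z : Fin n → ℂ) :
    ENNReal.ofReal (‖f z‖^2) * volume (Metric.closedBall (0 : Fin n → ℂ) 1)
      ≤ ∫⁻ w in Metric.closedBall (0 : Fin n → ℂ) 1,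
          ENNReal.ofReal (‖f (z + w)‖^2) := by
  set B := Metric.closedBall (0 : Fin n → ℂ) 1 with hB
  have hBmeas : MeasurableSet B := measurableSet_closedBall
  set F : ℝ → (Fin n → ℂ) → ENNReal :=
    fun θ w => ENNReal.ofReal (‖f (z + circleMap 0 1 θ • w)‖^2) with hF
  have contF : Continuous fun q : (Fin n → ℂ) × ℝ => F q.2 q.1 := by
    apply ENNReal.continuous_ofReal.comp
    apply Continuous.pow
    exact continuous_norm.comp <| hf.continuous.comp <|
      continuous_const.add <| ((continuous_circleMap 0 1).comp continuous_snd).smul continuous_fst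
  have step1 : ∀ w : Fin n → ℂ, ENNReal.ofReal (‖f z‖^2 * (2*π))
      ≤ ∫⁻ θ in Set.Ioc (0:ℝ) (2*π), F θ w := by
    intro w
    have hg : Differentiable ℂ fun c : ℂ => (f (z + c • w))^2 :=
      (hf.comp <| (differentiable_const z).add <| differentiable_id.smul_const w).pow 2
    have h := circle_mean_le' _ hg
    simp only [zero_smul, add_zero, map_pow] at h
    have hcont : Continuous fun θ : ℝ => ‖f (z + circleMap 0 1 θ • w)‖^2 := by
      apply Continuous.pow
      exact continuous_norm.comp <| hf.continuous.comp <|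
        continuous_const.add <| (continuous_circleMap 0 1).smul continuous_const
    rw [intervalIntegral.integral_of_le (by positivity)] at h
    have heq : ENNReal.ofReal (∫ θ in Set.Ioc (0:ℝ) (2*π),
        ‖f (z + circleMap 0 1 θ • w)‖^2)
        = ∫⁻ θ in Set.Ioc (0:ℝ) (2*π), F θ w := by
      rw [ofReal_integral_eq_lintegral_ofReal]
      · exact (hcont.integrableOn_Ioc)
      · exact Filter.Eventually.of_forall fun θ => by positivity
    calc ENNReal.ofReal (‖f z‖^2 * (2*π))
        ≤ ENNReal.ofReal (∫ θ in Set.Ioc (0:ℝ) (2*π),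
            ‖f (z + circleMap 0 1 θ • w)‖^2) := by
          apply ENNReal.ofReal_le_ofReal
          simpa [map_pow] using h
      _ = _ := heq
  have step3 : ∀ θ : ℝ, (∫⁻ w in B, F θ w)
      = ∫⁻ w in B, ENNReal.ofReal (‖f (z + w)‖^2) := by
    intro θ
    have hc : circleMap 0 1 θ = (Circle.exp θ : ℂ) := by
      simp [circleMap, Circle.coe_exp]
    have mp := rot_mp' n (Circle.exp θ)
    have hpre : (fun w : Fin n → ℂ => (Circle.exp θ : ℂ) • w) ⁻¹' B = B := by
      ext w
      simp only [Set.mem_preimage, hB, Metric.mem_closedBall, dist_zero_right]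
      rw [norm_smul]
      simp
    have mp2 : MeasurePreserving (fun w : Fin n → ℂ => (Circle.exp θ : ℂ) • w)
        (volume.restrict B) (volume.restrict B) := by
      have := mp.restrict_preimage hBmeas
      rwa [hpre] at this
    have hG : Measurable fun u : Fin n → ℂ => ENNReal.ofReal (‖f (z + u)‖^2) := by
      apply ENNReal.measurable_ofReal.comp
      exact ((continuous_norm.comp <| hf.continuous.comp <|
        continuous_const.add continuous_id).pow 2).measurable
    calc (∫⁻ w in B, F θ w)
        = ∫⁻ w in B, ENNReal.ofReal (‖f (z + (Circle.exp θ : ℂ) • w)‖^2) := by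
          simp only [hF, hc]
      _ = ∫⁻ w in B, ENNReal.ofReal (‖f (z + w)‖^2) := mp2.lintegral_comp hG
  have hmeasF : AEMeasurable (Function.uncurry fun (w : Fin n → ℂ) (θ : ℝ) => F θ w)
      ((volume.restrict B).prod (volume.restrict (Set.Ioc (0:ℝ) (2*π)))) :=
    contF.measurable.aemeasurable
  have swap : (∫⁻ w in B, ∫⁻ θ in Set.Ioc (0:ℝ) (2*π), F θ w)
      = ∫⁻ θ in Set.Ioc (0:ℝ) (2*π), ∫⁻ w in B, F θ w :=
    lintegral_lintegral_swap hmeasF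
  have chain : ENNReal.ofReal (‖f z‖^2 * (2*π)) * volume B
      ≤ (∫⁻ w in B, ENNReal.ofReal (‖f (z + w)‖^2)) * ENNReal.ofReal (2*π) := by
    calc ENNReal.ofReal (‖f z‖^2 * (2*π)) * volume B
        = ∫⁻ _ in B, ENNReal.ofReal (‖f z‖^2 * (2*π)) := (setLIntegral_const _ _).symm
      _ ≤ ∫⁻ w in B, ∫⁻ θ in Set.Ioc (0:ℝ) (2*π), F θ w := lintegral_mono fun w => step1 w
      _ = ∫⁻ θ in Set.Ioc (0:ℝ) (2*π), ∫⁻ w in B, F θ w := swap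
      _ = ∫⁻ _ in Set.Ioc (0:ℝ) (2*π),
            (∫⁻ w in B, ENNReal.ofReal (‖f (z + w)‖^2)) :=
          lintegral_congr fun θ => step3 θ
      _ = _ := by
          rw [setLIntegral_const, Real.volume_Ioc]
          norm_num
  have h2π : ENNReal.ofReal (2*π) ≠ 0 := by
    simp [ENNReal.ofReal_eq_zero]
    positivity
  rw [ENNReal.ofReal_mul (by positivity)] at chain
  refine (ENNReal.mul_le_mul_iff_left h2π ENNReal.ofReal_ne_top).1 ?_
  calc ENNReal.ofReal (‖f z‖^2) * volume B * ENNReal.ofReal (2*π)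
      = ENNReal.ofReal (‖f z‖^2) * ENNReal.ofReal (2*π) * volume B := by ring
    _ ≤ _ := chain

end Aux

/-- Example 2, converse direction: an entire function on ℂⁿ which is square
integrable against the weight `exp(-2σ√(p + ‖z‖²))` (Euclidean norm, Lebesgue
measure) has exponential growth of type at most `σ''` for every `σ'' > σ`. -/
theorem weighted_L2_exp_weight_implies_exponential_growth
    (n : ℕ) (σ p : ℝ) (hσ : 0 < σ) (hp : 0 < p)
    (f : (Fin n → ℂ) → ℂ) (hf : Differentiable ℂ f)
    (hint : ∫⁻ z : Fin n → ℂ,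
        ENNReal.ofReal (‖f z‖ ^ 2 *
          Real.exp (-2 * σ * Real.sqrt (p + ∑ i, ‖z i‖ ^ 2))) < ⊤) :
    ∀ σ'' : ℝ, σ < σ'' → ∃ C : ℝ, 0 < C ∧
      ∀ z : Fin n → ℂ, ‖f z‖ ≤
        C * Real.exp (σ'' * Real.sqrt (∑ i, ‖z i‖ ^ 2)) := by
  intro σ'' hσ''
  set B := Metric.closedBall (0 : Fin n → ℂ) 1 with hB
  set Q : (Fin n → ℂ) → ℝ := fun v => ∑ i, ‖v i‖ ^ 2 with hQ
  have hQnn : ∀ v, 0 ≤ Q v := fun v => Finset.sum_nonneg fun i _ => by positivity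
  set M : ENNReal := ∫⁻ z : Fin n → ℂ,
      ENNReal.ofReal (‖f z‖ ^ 2 * Real.exp (-2 * σ * Real.sqrt (p + Q z))) with hM
  have hMt : M ≠ ⊤ := hint.ne
  set V : ENNReal := volume B with hV
  have hV0 : V ≠ 0 := by
    refine ((Metric.measure_ball_pos volume (0 : Fin n → ℂ) one_pos).trans_le
      (measure_mono Metric.ball_subset_closedBall)).ne'
  have hVt : V ≠ ⊤ := measure_closedBall_lt_top.ne
  -- weight continuity
  have hHcont : Continuous fun u : Fin n → ℂ =>
      ‖f u‖ ^ 2 * Real.exp (-2 * σ * Real.sqrt (p + Q u)) := by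
    apply Continuous.mul
    · exact (continuous_norm.comp hf.continuous).pow 2
    · apply Real.continuous_exp.comp
      apply Continuous.mul continuous_const
      apply Real.continuous_sqrt.comp
      apply Continuous.add continuous_const
      exact continuous_finset_sum _ fun i _ => (continuous_norm.comp
        (continuous_apply i)).pow 2
  -- main pointwise estimate
  have main : ∀ z : Fin n → ℂ, ‖f z‖ ^ 2
      ≤ Real.exp (2 * σ * (Real.sqrt (p + Q z) + Real.sqrt n)) * (M.toReal / V.toReal) := by
    intro z
    have key := submean' n f hf z
    set E : ℝ := Real.exp (2 * σ * (Real.sqrt (p + Q z) + Real.sqrt n)) with hE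
    have hEpos : 0 < E := Real.exp_pos _
    -- pointwise bound on the ball
    have ptw : ∀ w ∈ B, ENNReal.ofReal (‖f (z + w)‖^2)
        ≤ ENNReal.ofReal E * ENNReal.ofReal (‖f (z + w)‖ ^ 2 *
            Real.exp (-2 * σ * Real.sqrt (p + Q (z + w)))) := by
      intro w hw
      have hQw : Q w ≤ n := by
        rw [hQ]
        calc (∑ i, ‖w i‖ ^ 2) ≤ ∑ _i : Fin n, (1:ℝ) := by
              apply Finset.sum_le_sum
              intro i _
              have h1 : ‖w i‖ ≤ 1 := by
                have := norm_le_pi_norm w i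
                refine this.trans ?_
                simpa [hB, dist_zero_right] using Metric.mem_closedBall.1 hw
              nlinarith [norm_nonneg (w i)]
          _ = n := by simp
      have hsq : Real.sqrt (p + Q (z + w)) ≤ Real.sqrt (p + Q z) + Real.sqrt n := by
        have t1 : Real.sqrt (Q (z + w)) ≤ Real.sqrt (Q z) + Real.sqrt (Q w) := sq_triangle' n z w
        have t2 : Real.sqrt (p + Q (z + w))
            ≤ Real.sqrt (p + (Real.sqrt (Q z) + Real.sqrt (Q w))^2) := by
          apply Real.sqrt_le_sqrt
          have : Q (z + w) = Real.sqrt (Q (z + w)) ^ 2 := (Real.sq_sqrt (hQnn _)).symm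
          rw [this]
          have h0 : 0 ≤ Real.sqrt (Q (z + w)) := Real.sqrt_nonneg _
          nlinarith [Real.sqrt_nonneg (Q z), Real.sqrt_nonneg (Q w)]
        have t3 := sqrt_lip' p (Real.sqrt (Q z)) (Real.sqrt (Q w)) hp.le
          (Real.sqrt_nonneg _) (Real.sqrt_nonneg _)
        rw [Real.sq_sqrt (hQnn z)] at t3
        have t4 : Real.sqrt (Q w) ≤ Real.sqrt n := Real.sqrt_le_sqrt hQw
        linarith
      have hexp : Real.exp (2 * σ * Real.sqrt (p + Q (z + w))) ≤ E := by
        rw [hE]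
        apply Real.exp_le_exp.2
        nlinarith
      rw [← ENNReal.ofReal_mul hEpos.le]
      apply ENNReal.ofReal_le_ofReal
      calc ‖f (z + w)‖ ^ 2
          = ‖f (z + w)‖ ^ 2 * Real.exp (-2 * σ * Real.sqrt (p + Q (z + w)))
            * Real.exp (2 * σ * Real.sqrt (p + Q (z + w))) := by
            rw [mul_assoc, ← Real.exp_add]
            simp
        _ ≤ ‖f (z + w)‖ ^ 2 * Real.exp (-2 * σ * Real.sqrt (p + Q (z + w))) * E := by
            apply mul_le_mul_of_nonneg_left hexp (by positivity)
        _ = E * (‖f (z + w)‖ ^ 2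
            * Real.exp (-2 * σ * Real.sqrt (p + Q (z + w)))) := by ring
    -- integrate
    have hHmeas : Measurable fun u : Fin n → ℂ => ENNReal.ofReal
        (‖f u‖ ^ 2 * Real.exp (-2 * σ * Real.sqrt (p + Q u))) :=
      ENNReal.measurable_ofReal.comp hHcont.measurable
    have hHmeas2 : Measurable fun w : Fin n → ℂ => ENNReal.ofReal
        (‖f (z + w)‖ ^ 2 * Real.exp (-2 * σ * Real.sqrt (p + Q (z + w)))) :=
      hHmeas.comp (measurable_const_add z)
    have intstep : (∫⁻ w in B, ENNReal.ofReal (‖f (z + w)‖^2))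
        ≤ ENNReal.ofReal E * M := by
      calc (∫⁻ w in B, ENNReal.ofReal (‖f (z + w)‖^2))
          ≤ ∫⁻ w in B, ENNReal.ofReal E * ENNReal.ofReal (‖f (z + w)‖ ^ 2 *
              Real.exp (-2 * σ * Real.sqrt (p + Q (z + w)))) :=
            setLIntegral_mono (by fun_prop) ptw
        _ = ENNReal.ofReal E * ∫⁻ w in B, ENNReal.ofReal (‖f (z + w)‖ ^ 2 *
              Real.exp (-2 * σ * Real.sqrt (p + Q (z + w)))) :=
            lintegral_const_mul _ hHmeas2
        _ ≤ ENNReal.ofReal E * ∫⁻ w, ENNReal.ofReal (‖f (z + w)‖ ^ 2 *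
              Real.exp (-2 * σ * Real.sqrt (p + Q (z + w)))) := by
            gcongr
            exact Measure.restrict_le_self
        _ = ENNReal.ofReal E * M := by
            congr 1
            rw [hM]
            exact (measurePreserving_add_left volume z).lintegral_comp hHmeas
    have final : ENNReal.ofReal (‖f z‖^2) ≤ ENNReal.ofReal E * M / V :=
      (ENNReal.le_div_iff_mul_le (Or.inl hV0) (Or.inl hVt)).2 (key.trans intstep)
    have hne : ENNReal.ofReal E * M / V ≠ ⊤ :=
      (ENNReal.div_lt_top (ENNReal.mul_ne_top ENNReal.ofReal_ne_top hMt) hV0).ne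
    have := ENNReal.toReal_mono hne final
    rw [ENNReal.toReal_ofReal (by positivity)] at this
    calc ‖f z‖ ^ 2 ≤ (ENNReal.ofReal E * M / V).toReal := this
      _ = E * (M.toReal / V.toReal) := by
          rw [ENNReal.toReal_div, ENNReal.toReal_mul, ENNReal.toReal_ofReal hEpos.le]
          ring
  -- conclude
  set R : ℝ := M.toReal / V.toReal with hR
  have hRnn : 0 ≤ R := by
    apply div_nonneg ENNReal.toReal_nonneg ENNReal.toReal_nonneg
  refine ⟨Real.sqrt R * Real.exp (σ * (Real.sqrt p + Real.sqrt n)) + 1, by positivity, ?_⟩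
  intro z
  have hm := main z
  have habs : ‖f z‖
      ≤ Real.exp (σ * (Real.sqrt (p + Q z) + Real.sqrt n)) * Real.sqrt R := by
    have h1 : ‖f z‖ = Real.sqrt (‖f z‖ ^ 2) :=
      (Real.sqrt_sq (norm_nonneg _)).symm
    rw [h1]
    have h2 : Real.exp (2 * σ * (Real.sqrt (p + Q z) + Real.sqrt n))
        = Real.exp (σ * (Real.sqrt (p + Q z) + Real.sqrt n)) ^ 2 := by
      rw [← Real.exp_nat_mul]
      congr 1
      push_cast
      ring
    calc Real.sqrt (‖f z‖ ^ 2)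
        ≤ Real.sqrt (Real.exp (2 * σ * (Real.sqrt (p + Q z) + Real.sqrt n)) * R) :=
          Real.sqrt_le_sqrt hm
      _ = Real.exp (σ * (Real.sqrt (p + Q z) + Real.sqrt n)) * Real.sqrt R := by
          rw [h2, Real.sqrt_mul (by positivity), Real.sqrt_sq (by positivity)]
  have hsqz : Real.sqrt (p + Q z) ≤ Real.sqrt p + Real.sqrt (Q z) :=
    sqrt_add_le' p (Q z) hp.le (hQnn z)
  have hexp2 : Real.exp (σ * (Real.sqrt (p + Q z) + Real.sqrt n))
      ≤ Real.exp (σ * (Real.sqrt p + Real.sqrt n)) * Real.exp (σ'' * Real.sqrt (Q z)) := by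
    rw [← Real.exp_add]
    apply Real.exp_le_exp.2
    have h3 : σ * Real.sqrt (Q z) ≤ σ'' * Real.sqrt (Q z) :=
      mul_le_mul_of_nonneg_right hσ''.le (Real.sqrt_nonneg _)
    nlinarith
  calc ‖f z‖
      ≤ Real.exp (σ * (Real.sqrt (p + Q z) + Real.sqrt n)) * Real.sqrt R := habs
    _ ≤ (Real.exp (σ * (Real.sqrt p + Real.sqrt n)) * Real.exp (σ'' * Real.sqrt (Q z)))
        * Real.sqrt R := mul_le_mul_of_nonneg_right hexp2 (Real.sqrt_nonneg _)
    _ = (Real.sqrt R * Real.exp (σ * (Real.sqrt p + Real.sqrt n)))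
        * Real.exp (σ'' * Real.sqrt (Q z)) := by ring
    _ ≤ (Real.sqrt R * Real.exp (σ * (Real.sqrt p + Real.sqrt n)) + 1)
        * Real.exp (σ'' * Real.sqrt (Q z)) := by
        apply mul_le_mul_of_nonneg_right _ (Real.exp_pos _).le
        linarith
end
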